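/- arXiv:1710.08722 — 4 statements merged into one kernel-verified Lean document; each statement's English description precedes it below -/
import Mathlib

section
/- There exists a universal constant C such that for every s ∈ (1/2,1) the following holds. Let γ ⊂ S² be a compact set and Λ > 0 be such that H¹(γ ∩ B_ρ(p)) ≤ Λ ρ for every p ∈ γ and every ρ ∈ (0,1/2). Then for every τ > 1, ∬_{γ×γ} |x̂ − τŷ|^{−3−s} dH¹(x̂) dH¹(ŷ) ≤ C Λ H¹(γ) ∬_{S¹×S¹} |X̂ − τŶ|^{−3−s} dH¹(X̂) dH¹(Ŷ). -/
open MeasureTheory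
open scoped ENNReal

noncomputable section

abbrev E3 := EuclideanSpace ℝ (Fin 3)
abbrev E2 := EuclideanSpace ℝ (Fin 2)

lemma aux_norm_id {E : Type*} [NormedAddCommGroup E] [InnerProductSpace ℝ E]
    {x y : E} (hx : ‖x‖ = 1) (hy : ‖y‖ = 1) (τ : ℝ) :
    ‖x - τ • y‖ ^ 2 = (τ - 1) ^ 2 + τ * ‖x - y‖ ^ 2 := by
  have h1 := norm_sub_sq_real x (τ • y)
  have h2 := norm_sub_sq_real x y
  rw [real_inner_smul_right, norm_smul, Real.norm_eq_abs] at h1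
  rw [hx, hy] at h1 h2
  have habs : |τ| ^ 2 = τ ^ 2 := sq_abs τ
  nlinarith [h1, h2, habs]

lemma aux_H1_lower {A : Set E2} {v : E2} (hv : ‖v‖ = 1) {c d : ℝ}
    (h : Set.Icc c d ⊆ (fun Y : E2 => (inner ℝ Y v : ℝ)) '' A) :
    ENNReal.ofReal (d - c) ≤ μH[1] A := by
  have hf : LipschitzWith 1 (fun Y : E2 => (inner ℝ Y v : ℝ)) := by
    apply LipschitzWith.of_dist_le_mul
    intro Y Z
    rw [Real.dist_eq, ← inner_sub_left]
    calc |(inner ℝ (Y - Z) v : ℝ)| ≤ ‖Y - Z‖ * ‖v‖ := abs_real_inner_le_norm _ _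
      _ = 1 * dist Y Z := by rw [hv, dist_eq_norm]; ring
  calc ENNReal.ofReal (d - c) = volume (Set.Icc c d) := (Real.volume_Icc).symm
    _ = μH[1] (Set.Icc c d) := by rw [MeasureTheory.hausdorffMeasure_real]
    _ ≤ μH[1] ((fun Y : E2 => (inner ℝ Y v : ℝ)) '' A) := measure_mono h
    _ ≤ μH[1] A := by
        simpa using hf.hausdorffMeasure_image_le zero_le_one A

lemma aux_perp {X : E2} (hX : ‖X‖ = 1) :
    ∃ v : E2, ‖v‖ = 1 ∧ (inner ℝ X v : ℝ) = 0 := by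
  refine ⟨(WithLp.equiv 2 (Fin 2 → ℝ)).symm ![-X 1, X 0], ?_, ?_⟩
  · have h1 : ‖X‖ = Real.sqrt (∑ i, ‖X i‖ ^ 2) := EuclideanSpace.norm_eq X
    have h2 := EuclideanSpace.norm_eq ((WithLp.equiv 2 (Fin 2 → ℝ)).symm ![-X 1, X 0])
    rw [Fin.sum_univ_two] at h1 h2
    simp only [WithLp.equiv_symm_apply, PiLp.toLp_apply, Matrix.cons_val_zero, Matrix.cons_val_one,
      Matrix.head_cons, norm_neg] at h2
    rw [WithLp.equiv_symm_apply, h2, ← hX, h1]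
    congr 1
    ring
  · rw [PiLp.inner_apply, Fin.sum_univ_two]
    simp only [WithLp.equiv_symm_apply, PiLp.toLp_apply, Matrix.cons_val_zero, Matrix.cons_val_one,
      Matrix.head_cons, RCLike.inner_apply, conj_trivial]
    ring

lemma aux_cap {X : E2} (hX : X ∈ Metric.sphere (0:E2) 1) {δ : ℝ} (h0 : 0 < δ) (h1 : δ ≤ 1) :
    ENNReal.ofReal (δ / 2) ≤ μH[1] (Metric.sphere (0:E2) 1 ∩ Metric.closedBall X δ) := by
  rw [mem_sphere_zero_iff_norm] at hX
  obtain ⟨v, hv, hXv⟩ := aux_perp hX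
  have key : Set.Icc (0:ℝ) (δ/2) ⊆ (fun Y : E2 => (inner ℝ Y v : ℝ)) ''
      (Metric.sphere (0:E2) 1 ∩ Metric.closedBall X δ) := by
    rintro t ⟨ht0, ht1⟩
    have htd : t ≤ δ / 2 := ht1
    have ht2 : t ^ 2 ≤ 1 := by nlinarith
    have hsq : Real.sqrt (1 - t ^ 2) ^ 2 = 1 - t ^ 2 := Real.sq_sqrt (by linarith)
    set a := Real.sqrt (1 - t ^ 2) with ha
    have ha0 : 0 ≤ a := Real.sqrt_nonneg _
    have ha1 : 1 - t ^ 2 ≤ a := by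
      nlinarith [hsq, ha0, ht2, sq_nonneg (a - 1), sq_nonneg (a + 1)]
    refine ⟨a • X + t • v, ⟨?_, ?_⟩, ?_⟩
    · rw [mem_sphere_zero_iff_norm]
      have := norm_add_sq_real (a • X) (t • v)
      rw [real_inner_smul_left, real_inner_smul_right, hXv, norm_smul, norm_smul, hX, hv,
        Real.norm_eq_abs, Real.norm_eq_abs] at this
      have h3 : |a| = a := abs_of_nonneg ha0
      have h4 : |t| ^ 2 = t ^ 2 := sq_abs t
      have h5 : ‖a • X + t • v‖ ^ 2 = 1 := by rw [this, h3]; nlinarith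
      nlinarith [norm_nonneg (a • X + t • v)]
    · rw [Metric.mem_closedBall, dist_eq_norm]
      have heq : a • X + t • v - X = (a - 1) • X + t • v := by
        rw [sub_smul, one_smul]; abel
      rw [heq]
      have := norm_add_sq_real ((a - 1) • X) (t • v)
      rw [real_inner_smul_left, real_inner_smul_right, hXv, norm_smul, norm_smul, hX, hv,
        Real.norm_eq_abs, Real.norm_eq_abs] at this
      have h3 : |a - 1| ^ 2 = (a - 1) ^ 2 := sq_abs _
      have h4 : |t| ^ 2 = t ^ 2 := sq_abs t
      have h5 : ‖(a - 1) • X + t • v‖ ^ 2 ≤ δ ^ 2 / 2 := by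
        rw [this]; nlinarith
      nlinarith [norm_nonneg ((a - 1) • X + t • v)]
    · simp only [inner_add_left, real_inner_smul_left, hXv,
        real_inner_self_eq_norm_sq, hv]
      ring
  have := aux_H1_lower hv key
  simpa using this

lemma aux_dist_lower {E : Type*} [NormedAddCommGroup E] [InnerProductSpace ℝ E]
    {x y : E} (hx : ‖x‖ = 1) (hy : ‖y‖ = 1) {τ : ℝ} (hτ : 1 < τ) :
    (τ - 1) ≤ ‖x - τ • y‖ ∧ ‖x - y‖ ≤ ‖x - τ • y‖ := by
  have h := aux_norm_id hx hy τ
  constructor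
  · nlinarith [norm_nonneg (x - τ • y), norm_nonneg (x - y), sq_nonneg (‖x - y‖)]
  · nlinarith [norm_nonneg (x - τ • y), norm_nonneg (x - y), sq_nonneg (τ - 1)]

lemma aux_inner_upper {γ : Set E3} (hγm : MeasurableSet γ)
    (hγs : γ ⊆ Metric.sphere (0:E3) 1)
    {s : ℝ} (hs0 : 0 < s) (hs1 : s ≤ 1) {τ Λ' : ℝ} (hτ : 1 < τ) (hΛ' : 0 ≤ Λ')
    (hdens : ∀ r : ℝ, 0 < r → ∀ p ∈ γ, μH[1] (γ ∩ Metric.ball p r) ≤ ENNReal.ofReal (Λ' * r))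
    {x : E3} (hx : x ∈ γ) :
    (∫⁻ y in γ, ENNReal.ofReal (‖x - τ • y‖ ^ (-(3:ℝ) - s)) ∂μH[1])
      ≤ ENNReal.ofReal (4 * Λ' * (τ - 1) ^ (-(2:ℝ) - s)) := by
  set δ := τ - 1 with hδdef
  have hδ : 0 < δ := by rw [hδdef]; linarith
  have hxs : ‖x‖ = 1 := by
    have := hγs hx; rwa [mem_sphere_zero_iff_norm] at this
  -- the dyadic pieces
  set F : ℕ → E3 → ℝ≥0∞ := fun k =>
    (Metric.ball x (2^(k+1) * δ)).indicator
      (fun _ => ENNReal.ofReal (((2:ℝ)^k * δ) ^ (-(3:ℝ) - s))) with hF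
  -- pointwise bound
  have hpt : ∀ y ∈ γ, ENNReal.ofReal (‖x - τ • y‖ ^ (-(3:ℝ) - s)) ≤ ∑' k, F k y := by
    intro y hy
    have hys : ‖y‖ = 1 := by
      have := hγs hy; rwa [mem_sphere_zero_iff_norm] at this
    obtain ⟨hd1, hd2⟩ := aux_dist_lower hxs hys hτ
    have hex : ∃ k : ℕ, ‖x - y‖ < 2^(k+1) * δ := by
      obtain ⟨k, hk⟩ := pow_unbounded_of_one_lt (‖x - y‖ / δ) (one_lt_two (α := ℝ))
      refine ⟨k, ?_⟩
      have : ‖x - y‖ < 2^k * δ := by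
        rw [div_lt_iff₀ hδ] at hk; linarith
      have h2 : (2:ℝ)^k * δ ≤ 2^(k+1) * δ := by
        have : (2:ℝ)^k ≤ 2^(k+1) := by
          apply pow_le_pow_right₀ (by norm_num); omega
        nlinarith
      linarith
    set n := Nat.find hex with hn
    have hmem : ‖x - y‖ < 2^(n+1) * δ := Nat.find_spec hex
    have hlow : 2^(n:ℕ) * δ ≤ ‖x - τ • y‖ := by
      rcases Nat.eq_zero_or_pos n with h0 | hpos
      · rw [h0, pow_zero, one_mul, hδdef]; exact hd1
      · obtain ⟨m, hm⟩ := Nat.exists_eq_succ_of_ne_zero hpos.ne'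
        have := Nat.find_min hex (m := m) (by omega)
        push_neg at this
        rw [hm]
        calc (2:ℝ)^(m+1) * δ ≤ ‖x - y‖ := this
          _ ≤ ‖x - τ • y‖ := hd2
    calc ENNReal.ofReal (‖x - τ • y‖ ^ (-(3:ℝ) - s))
        ≤ ENNReal.ofReal (((2:ℝ)^n * δ) ^ (-(3:ℝ) - s)) := by
          apply ENNReal.ofReal_le_ofReal
          exact Real.rpow_le_rpow_of_nonpos (by positivity) hlow (by linarith)
      _ = F n y := by
          rw [hF]
          simp only []
          rw [Set.indicator_of_mem]
          rw [Metric.mem_ball, dist_eq_norm, norm_sub_rev]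
          exact hmem
      _ ≤ ∑' k, F k y := ENNReal.le_tsum n
  -- integrate
  calc (∫⁻ y in γ, ENNReal.ofReal (‖x - τ • y‖ ^ (-(3:ℝ) - s)) ∂μH[1])
      ≤ ∫⁻ y in γ, (∑' k, F k y) ∂μH[1] := setLIntegral_mono' hγm hpt
    _ = ∑' k, ∫⁻ y in γ, F k y ∂μH[1] := by
        apply lintegral_tsum
        intro k
        exact (measurable_const.indicator Metric.isOpen_ball.measurableSet).aemeasurable
    _ ≤ ∑' k, ENNReal.ofReal (2 * Λ' * δ ^ (-(2:ℝ) - s)) * (ENNReal.ofReal (1/2))^k := by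
        apply ENNReal.tsum_le_tsum
        intro k
        have hstep : ∫⁻ y in γ, F k y ∂μH[1]
            = ENNReal.ofReal (((2:ℝ)^k * δ) ^ (-(3:ℝ) - s)) *
              μH[1] (Metric.ball x (2^(k+1) * δ) ∩ γ) := by
          rw [hF]
          simp only []
          rw [lintegral_indicator Metric.isOpen_ball.measurableSet,
            setLIntegral_const, Measure.restrict_apply Metric.isOpen_ball.measurableSet]
        rw [hstep, Set.inter_comm]
        have hmeas : μH[1] (γ ∩ Metric.ball x (2^(k+1) * δ)) ≤
            ENNReal.ofReal (Λ' * (2^(k+1) * δ)) :=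
          hdens _ (by positivity) x hx
        calc ENNReal.ofReal (((2:ℝ)^k * δ) ^ (-(3:ℝ) - s)) *
              μH[1] (γ ∩ Metric.ball x (2^(k+1) * δ))
            ≤ ENNReal.ofReal (((2:ℝ)^k * δ) ^ (-(3:ℝ) - s)) *
              ENNReal.ofReal (Λ' * (2^(k+1) * δ)) := by
              exact mul_le_mul_right hmeas _
          _ = ENNReal.ofReal ((((2:ℝ)^k * δ) ^ (-(3:ℝ) - s)) * (Λ' * (2^(k+1) * δ))) := by
              rw [← ENNReal.ofReal_mul (by positivity)]
          _ ≤ ENNReal.ofReal ((2 * Λ' * δ ^ (-(2:ℝ) - s)) * (1/2)^k) := by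
              apply ENNReal.ofReal_le_ofReal
              -- real arithmetic
              have e1 : (((2:ℝ)^k * δ) ^ (-(3:ℝ) - s))
                  = ((2:ℝ)^k) ^ (-(3:ℝ) - s) * δ ^ (-(3:ℝ) - s) :=
                Real.mul_rpow (by positivity) (by positivity)
              have e2 : δ ^ (-(3:ℝ) - s) * δ = δ ^ (-(2:ℝ) - s) := by
                nth_rewrite 2 [show δ = δ ^ (1:ℝ) by rw [Real.rpow_one]]
                rw [← Real.rpow_add hδ]
                congr 1; ring
              have e3 : ((2:ℝ)^k) ^ (-(3:ℝ) - s) * (2:ℝ)^(k+1)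
                  = 2 * ((2:ℝ)^k) ^ (-(2:ℝ) - s) := by
                have h5 : ((2:ℝ)^k) ^ (-(3:ℝ) - s) * ((2:ℝ)^k) ^ (1:ℝ)
                    = ((2:ℝ)^k) ^ (-(2:ℝ) - s) := by
                  rw [← Real.rpow_add (by positivity)]; congr 1; ring
                calc ((2:ℝ)^k) ^ (-(3:ℝ) - s) * (2:ℝ)^(k+1)
                    = (((2:ℝ)^k) ^ (-(3:ℝ) - s) * ((2:ℝ)^k) ^ (1:ℝ)) * 2 := by
                      rw [Real.rpow_one, pow_succ]; ring
                  _ = 2 * ((2:ℝ)^k) ^ (-(2:ℝ) - s) := by rw [h5]; ring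
              have e4 : ((2:ℝ)^k) ^ (-(2:ℝ) - s) ≤ (1/2:ℝ)^k := by
                have h1 : ((2:ℝ)^k) ^ (-(2:ℝ) - s) ≤ ((2:ℝ)^k) ^ (-(1:ℝ)) := by
                  apply Real.rpow_le_rpow_of_exponent_le (one_le_pow₀ one_le_two)
                  linarith
                have h2 : ((2:ℝ)^k) ^ (-(1:ℝ)) = (1/2:ℝ)^k := by
                  rw [Real.rpow_neg_one, ← inv_pow]
                  norm_num
                linarith
              calc ((2:ℝ)^k * δ) ^ (-(3:ℝ) - s) * (Λ' * (2^(k+1) * δ))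
                  = (((2:ℝ)^k) ^ (-(3:ℝ) - s) * (2:ℝ)^(k+1)) * Λ' * (δ ^ (-(3:ℝ) - s) * δ) := by
                    rw [e1]; ring
                _ = 2 * Λ' * δ ^ (-(2:ℝ) - s) * ((2:ℝ)^k) ^ (-(2:ℝ) - s) := by
                    rw [e2, e3]; ring
                _ ≤ 2 * Λ' * δ ^ (-(2:ℝ) - s) * (1/2:ℝ)^k := by
                    apply mul_le_mul_of_nonneg_left e4
                    positivity
          _ = ENNReal.ofReal (2 * Λ' * δ ^ (-(2:ℝ) - s)) * (ENNReal.ofReal (1/2))^k := by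
              rw [ENNReal.ofReal_mul (by positivity), ENNReal.ofReal_pow (by norm_num)]
    _ = ENNReal.ofReal (2 * Λ' * δ ^ (-(2:ℝ) - s)) * 2 := by
        rw [ENNReal.tsum_mul_left]
        congr 1
        rw [ENNReal.tsum_geometric]
        rw [show ENNReal.ofReal (1/2 : ℝ) = 2⁻¹ by
          rw [show (1/2 : ℝ) = 2⁻¹ by norm_num, ENNReal.ofReal_inv_of_pos (by norm_num)]
          norm_num]
        rw [ENNReal.one_sub_inv_two]
        norm_num
    _ = ENNReal.ofReal (4 * Λ' * δ ^ (-(2:ℝ) - s)) := by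
        rw [show (2:ℝ≥0∞) = ENNReal.ofReal 2 by norm_num, ← ENNReal.ofReal_mul (by positivity)]
        ring_nf

lemma aux_sphere_meas : ENNReal.ofReal (1/2 : ℝ) ≤ μH[1] (Metric.sphere (0:E2) 1) := by
  have hX : (EuclideanSpace.single (0 : Fin 2) (1:ℝ)) ∈ Metric.sphere (0:E2) 1 := by
    rw [mem_sphere_zero_iff_norm, EuclideanSpace.norm_single]
    norm_num
  calc ENNReal.ofReal (1/2 : ℝ) = ENNReal.ofReal ((1:ℝ)/2) := by norm_num
    _ ≤ μH[1] (Metric.sphere (0:E2) 1 ∩ Metric.closedBall _ 1) :=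
        aux_cap hX one_pos le_rfl
    _ ≤ μH[1] (Metric.sphere (0:E2) 1) := measure_mono Set.inter_subset_left

lemma aux_rhs_inner_lower {X : E2} (hX : X ∈ Metric.sphere (0:E2) 1) {s τ : ℝ}
    (hs0 : 0 < s) (hs1 : s ≤ 1) (hτ1 : 1 < τ) (hτ2 : τ ≤ 2) :
    ENNReal.ofReal ((τ-1) ^ (-(2:ℝ)-s) / 32)
      ≤ ∫⁻ Y in Metric.sphere (0:E2) 1,
          ENNReal.ofReal (‖X - τ • Y‖ ^ (-(3:ℝ) - s)) ∂μH[1] := by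
  have hXn : ‖X‖ = 1 := by rwa [mem_sphere_zero_iff_norm] at hX
  set δ := τ - 1 with hδdef
  have hδ0 : 0 < δ := by rw [hδdef]; linarith
  have hδ1 : δ ≤ 1 := by rw [hδdef]; linarith
  set A := Metric.sphere (0:E2) 1 ∩ Metric.closedBall X δ with hA
  have hAm : MeasurableSet A :=
    (Metric.isClosed_sphere).measurableSet.inter Metric.isClosed_closedBall.measurableSet
  have hpt : ∀ Y ∈ A, ENNReal.ofReal ((2*δ) ^ (-(3:ℝ)-s))
      ≤ ENNReal.ofReal (‖X - τ • Y‖ ^ (-(3:ℝ) - s)) := by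
    rintro Y ⟨hY1, hY2⟩
    have hYn : ‖Y‖ = 1 := by rwa [mem_sphere_zero_iff_norm] at hY1
    rw [Metric.mem_closedBall, dist_eq_norm] at hY2
    have hid := aux_norm_id hXn hYn τ
    have hY2' : ‖X - Y‖ ≤ δ := by rw [norm_sub_rev]; exact hY2
    have hup : ‖X - τ • Y‖ ≤ 2 * δ := by
      nlinarith [norm_nonneg (X - τ • Y), norm_nonneg (X - Y), hδ0, hτ2,
        mul_le_mul_of_nonneg_left hY2' (le_of_lt hδ0)]
    have hlo : (0:ℝ) < ‖X - τ • Y‖ := lt_of_lt_of_le hδ0 (aux_dist_lower hXn hYn hτ1).1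
    exact ENNReal.ofReal_le_ofReal
      (Real.rpow_le_rpow_of_nonpos hlo hup (by linarith))
  calc ENNReal.ofReal (δ ^ (-(2:ℝ)-s) / 32)
      ≤ ENNReal.ofReal ((2*δ) ^ (-(3:ℝ)-s) * (δ/2)) := by
        apply ENNReal.ofReal_le_ofReal
        have e1 : ((2:ℝ)*δ) ^ (-(3:ℝ)-s) = (2:ℝ) ^ (-(3:ℝ)-s) * δ ^ (-(3:ℝ)-s) :=
          Real.mul_rpow (by norm_num) (by positivity)
        have e2 : δ ^ (-(3:ℝ)-s) * δ = δ ^ (-(2:ℝ)-s) := by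
          nth_rewrite 2 [show δ = δ ^ (1:ℝ) by rw [Real.rpow_one]]
          rw [← Real.rpow_add hδ0]
          congr 1; ring
        have e3 : (1/16 : ℝ) ≤ (2:ℝ) ^ (-(3:ℝ)-s) := by
          calc (1/16 : ℝ) = (2:ℝ) ^ (-(4:ℝ)) := by
                rw [show (-(4:ℝ)) = ((-4 : ℤ) : ℝ) by norm_num, Real.rpow_intCast]
                norm_num
            _ ≤ (2:ℝ) ^ (-(3:ℝ)-s) := Real.rpow_le_rpow_of_exponent_le one_le_two (by linarith)
        calc δ ^ (-(2:ℝ)-s) / 32 = (1/16) * (δ ^ (-(3:ℝ)-s) * δ) / 2 := by rw [e2]; ring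
          _ ≤ (2:ℝ) ^ (-(3:ℝ)-s) * (δ ^ (-(3:ℝ)-s) * δ) / 2 := by
              have hpos : (0:ℝ) ≤ δ ^ (-(3:ℝ)-s) * δ := by positivity
              have := mul_le_mul_of_nonneg_right e3 hpos
              linarith
          _ = (2*δ) ^ (-(3:ℝ)-s) * (δ/2) := by rw [e1]; ring
    _ = ENNReal.ofReal ((2*δ) ^ (-(3:ℝ)-s)) * ENNReal.ofReal (δ/2) :=
        ENNReal.ofReal_mul (by positivity)
    _ ≤ ENNReal.ofReal ((2*δ) ^ (-(3:ℝ)-s)) * μH[1] A :=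
        mul_le_mul_right (aux_cap hX hδ0 hδ1) _
    _ = ∫⁻ _ in A, ENNReal.ofReal ((2*δ) ^ (-(3:ℝ)-s)) ∂μH[1] :=
        (setLIntegral_const A _).symm
    _ ≤ ∫⁻ Y in A, ENNReal.ofReal (‖X - τ • Y‖ ^ (-(3:ℝ) - s)) ∂μH[1] :=
        setLIntegral_mono' hAm hpt
    _ ≤ ∫⁻ Y in Metric.sphere (0:E2) 1,
          ENNReal.ofReal (‖X - τ • Y‖ ^ (-(3:ℝ) - s)) ∂μH[1] :=
        lintegral_mono' (Measure.restrict_mono Set.inter_subset_left le_rfl) le_rfl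

lemma aux_rhs_lower_small {s τ : ℝ}
    (hs0 : 0 < s) (hs1 : s ≤ 1) (hτ1 : 1 < τ) (hτ2 : τ ≤ 2) :
    ENNReal.ofReal ((τ-1) ^ (-(2:ℝ)-s) / 64)
      ≤ ∫⁻ X in Metric.sphere (0:E2) 1, ∫⁻ Y in Metric.sphere (0:E2) 1,
          ENNReal.ofReal (‖X - τ • Y‖ ^ (-(3:ℝ) - s)) ∂μH[1] ∂μH[1] := by
  calc ENNReal.ofReal ((τ-1) ^ (-(2:ℝ)-s) / 64)
      = ENNReal.ofReal ((τ-1) ^ (-(2:ℝ)-s) / 32 * (1/2)) := by rw [show ((τ-1) ^ (-(2:ℝ)-s) / 64 : ℝ) = (τ-1) ^ (-(2:ℝ)-s) / 32 * (1/2) by ring]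
    _ = ENNReal.ofReal ((τ-1) ^ (-(2:ℝ)-s) / 32) * ENNReal.ofReal (1/2 : ℝ) :=
        ENNReal.ofReal_mul (by
          have h : (0:ℝ) < τ - 1 := by linarith
          positivity)
    _ ≤ ENNReal.ofReal ((τ-1) ^ (-(2:ℝ)-s) / 32) * μH[1] (Metric.sphere (0:E2) 1) :=
        mul_le_mul_right aux_sphere_meas _
    _ = ∫⁻ _ in Metric.sphere (0:E2) 1,
          ENNReal.ofReal ((τ-1) ^ (-(2:ℝ)-s) / 32) ∂μH[1] := (setLIntegral_const _ _).symm
    _ ≤ ∫⁻ X in Metric.sphere (0:E2) 1, ∫⁻ Y in Metric.sphere (0:E2) 1,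
          ENNReal.ofReal (‖X - τ • Y‖ ^ (-(3:ℝ) - s)) ∂μH[1] ∂μH[1] := by
        apply setLIntegral_mono' (Metric.isClosed_sphere).measurableSet
        intro X hX
        exact aux_rhs_inner_lower hX hs0 hs1 hτ1 hτ2

lemma aux_rhs_lower_big {s τ : ℝ}
    (hs0 : 0 < s) (hs1 : s ≤ 1) (hτ2 : 2 ≤ τ) :
    ENNReal.ofReal ((τ-1) ^ (-(3:ℝ)-s) / 324)
      ≤ ∫⁻ X in Metric.sphere (0:E2) 1, ∫⁻ Y in Metric.sphere (0:E2) 1,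
          ENNReal.ofReal (‖X - τ • Y‖ ^ (-(3:ℝ) - s)) ∂μH[1] ∂μH[1] := by
  set δ := τ - 1 with hδdef
  have hδ1 : 1 ≤ δ := by rw [hδdef]; linarith
  have hδ0 : 0 < δ := by linarith
  have hτ1 : 1 < τ := by linarith
  have hpt : ∀ X ∈ Metric.sphere (0:E2) 1, ∀ Y ∈ Metric.sphere (0:E2) 1,
      ENNReal.ofReal ((3*δ) ^ (-(3:ℝ)-s))
        ≤ ENNReal.ofReal (‖X - τ • Y‖ ^ (-(3:ℝ) - s)) := by
    intro X hX Y hY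
    rw [mem_sphere_zero_iff_norm] at hX hY
    have hup : ‖X - τ • Y‖ ≤ 3 * δ := by
      calc ‖X - τ • Y‖ ≤ ‖X‖ + ‖τ • Y‖ := norm_sub_le _ _
        _ = 1 + |τ| := by rw [hX, norm_smul, hY, Real.norm_eq_abs, mul_one]
        _ = 1 + τ := by rw [abs_of_pos (by linarith)]
        _ ≤ 3 * δ := by rw [hδdef]; linarith
    have hlo : (0:ℝ) < ‖X - τ • Y‖ := by
      have := (aux_dist_lower hX hY hτ1).1
      linarith
    exact ENNReal.ofReal_le_ofReal (Real.rpow_le_rpow_of_nonpos hlo hup (by linarith))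
  have hc : ENNReal.ofReal ((τ-1) ^ (-(3:ℝ)-s) / 324)
      ≤ ENNReal.ofReal ((3*δ) ^ (-(3:ℝ)-s)) * ENNReal.ofReal (1/2:ℝ) * ENNReal.ofReal (1/2:ℝ) := by
    rw [← ENNReal.ofReal_mul (by positivity), ← ENNReal.ofReal_mul (by positivity)]
    apply ENNReal.ofReal_le_ofReal
    have e1 : ((3:ℝ)*δ) ^ (-(3:ℝ)-s) = (3:ℝ) ^ (-(3:ℝ)-s) * δ ^ (-(3:ℝ)-s) :=
      Real.mul_rpow (by norm_num) (by positivity)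
    have e3 : (1/81 : ℝ) ≤ (3:ℝ) ^ (-(3:ℝ)-s) := by
      calc (1/81 : ℝ) = (3:ℝ) ^ (-(4:ℝ)) := by
            rw [show (-(4:ℝ)) = ((-4 : ℤ) : ℝ) by norm_num, Real.rpow_intCast]
            norm_num
        _ ≤ (3:ℝ) ^ (-(3:ℝ)-s) := Real.rpow_le_rpow_of_exponent_le (by norm_num) (by linarith)
    have hpos : (0:ℝ) ≤ δ ^ (-(3:ℝ)-s) := by positivity
    calc δ ^ (-(3:ℝ)-s) / 324 = (1/81) * δ ^ (-(3:ℝ)-s) * (1/2) * (1/2) := by ring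
      _ ≤ (3:ℝ) ^ (-(3:ℝ)-s) * δ ^ (-(3:ℝ)-s) * (1/2) * (1/2) := by
          nlinarith [mul_le_mul_of_nonneg_right e3 hpos]
      _ = (3*δ) ^ (-(3:ℝ)-s) * (1/2) * (1/2) := by rw [e1]
  refine le_trans hc ?_
  calc ENNReal.ofReal ((3*δ) ^ (-(3:ℝ)-s)) * ENNReal.ofReal (1/2:ℝ) * ENNReal.ofReal (1/2:ℝ)
      ≤ ENNReal.ofReal ((3*δ) ^ (-(3:ℝ)-s)) * μH[1] (Metric.sphere (0:E2) 1)
          * μH[1] (Metric.sphere (0:E2) 1) := by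
        exact mul_le_mul' (mul_le_mul_right aux_sphere_meas _) aux_sphere_meas
    _ = ∫⁻ _ in Metric.sphere (0:E2) 1, (ENNReal.ofReal ((3*δ) ^ (-(3:ℝ)-s))
          * μH[1] (Metric.sphere (0:E2) 1)) ∂μH[1] := by
        rw [setLIntegral_const]
    _ ≤ ∫⁻ X in Metric.sphere (0:E2) 1, ∫⁻ Y in Metric.sphere (0:E2) 1,
          ENNReal.ofReal (‖X - τ • Y‖ ^ (-(3:ℝ) - s)) ∂μH[1] ∂μH[1] := by
        apply setLIntegral_mono' (Metric.isClosed_sphere).measurableSet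
        intro X hX
        calc ENNReal.ofReal ((3*δ) ^ (-(3:ℝ)-s)) * μH[1] (Metric.sphere (0:E2) 1)
            = ∫⁻ _ in Metric.sphere (0:E2) 1,
                ENNReal.ofReal ((3*δ) ^ (-(3:ℝ)-s)) ∂μH[1] := (setLIntegral_const _ _).symm
          _ ≤ ∫⁻ Y in Metric.sphere (0:E2) 1,
                ENNReal.ofReal (‖X - τ • Y‖ ^ (-(3:ℝ) - s)) ∂μH[1] :=
              setLIntegral_mono' (Metric.isClosed_sphere).measurableSet (hpt X hX)

lemma aux_gamma_meas {t : Finset E3}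
    (ht : Metric.sphere (0:E3) 1 ⊆ ⋃ p ∈ t, Metric.ball p (1/8))
    {γ : Set E3} (hγs : γ ⊆ Metric.sphere (0:E3) 1) {Λ : ℝ} (hΛ : 0 < Λ)
    (hd : ∀ p ∈ γ, ∀ ρ ∈ Set.Ioo (0:ℝ) (1/2),
      μH[1] (γ ∩ Metric.ball p ρ) ≤ ENNReal.ofReal (Λ * ρ)) :
    μH[1] γ ≤ ENNReal.ofReal ((t.card : ℝ) / 4 * Λ) := by
  have hcover : γ ⊆ ⋃ p ∈ t, (γ ∩ Metric.ball p (1/8)) := by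
    intro x hx
    obtain ⟨p, hp, hxp⟩ := Set.mem_iUnion₂.1 (ht (hγs hx))
    exact Set.mem_iUnion₂.2 ⟨p, hp, hx, hxp⟩
  calc μH[1] γ ≤ μH[1] (⋃ p ∈ t, (γ ∩ Metric.ball p (1/8))) := measure_mono hcover
    _ ≤ ∑ p ∈ t, μH[1] (γ ∩ Metric.ball p (1/8)) := measure_biUnion_finset_le t _
    _ ≤ ∑ _p ∈ t, ENNReal.ofReal (Λ / 4) := by
        apply Finset.sum_le_sum
        intro q _
        rcases Set.eq_empty_or_nonempty (γ ∩ Metric.ball q (1/8)) with he | ⟨p, hpγ, hpq⟩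
        · rw [he, measure_empty]
          exact zero_le
        · have hsub : γ ∩ Metric.ball q (1/8) ⊆ γ ∩ Metric.ball p (1/4) := by
            rintro y ⟨hyγ, hyq⟩
            refine ⟨hyγ, ?_⟩
            rw [Metric.mem_ball] at *
            calc dist y p ≤ dist y q + dist p q := dist_triangle_right y p q
              _ < 1/8 + 1/8 := add_lt_add hyq hpq
              _ = 1/4 := by norm_num
          calc μH[1] (γ ∩ Metric.ball q (1/8)) ≤ μH[1] (γ ∩ Metric.ball p (1/4)) :=
                measure_mono hsub
            _ ≤ ENNReal.ofReal (Λ * (1/4)) := hd p hpγ (1/4) (by norm_num)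
            _ = ENNReal.ofReal (Λ / 4) := by rw [show Λ * (1/4) = Λ / 4 by ring]
    _ = ENNReal.ofReal ((t.card : ℝ) / 4 * Λ) := by
        rw [Finset.sum_const, nsmul_eq_mul]
        rw [show ((t.card : ℝ) / 4 * Λ) = (t.card : ℝ) * (Λ / 4) by ring,
          ENNReal.ofReal_mul (by positivity), ENNReal.ofReal_natCast]


/-- there is a universal `C` such that for every `s ∈ (1/2,1)`, every compact
`γ ⊆ S²` satisfying the upper density bound `H¹(γ ∩ B_ρ(p)) ≤ Λρ` for `p ∈ γ`, `ρ ∈ (0,1/2)`,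
and every `τ > 1`,
`∬_{γ×γ} |x̂−τŷ|^{−3−s} ≤ C Λ H¹(γ) ∬_{S¹×S¹} |X̂−τŶ|^{−3−s}`. -/
theorem kernel_double_integral_comparison :
    ∃ C : ℝ, 0 < C ∧ ∀ s ∈ Set.Ioo (1/2 : ℝ) 1,
      ∀ γ : Set E3, IsCompact γ → γ ⊆ Metric.sphere (0:E3) 1 →
      ∀ Λ : ℝ, 0 < Λ →
      (∀ p ∈ γ, ∀ ρ ∈ Set.Ioo (0:ℝ) (1/2),
        μH[1] (γ ∩ Metric.ball p ρ) ≤ ENNReal.ofReal (Λ * ρ)) →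
      ∀ τ : ℝ, 1 < τ →
        (∫⁻ x in γ, ∫⁻ y in γ,
            ENNReal.ofReal (‖x - τ • y‖ ^ (-(3:ℝ) - s)) ∂μH[1] ∂μH[1])
          ≤ ENNReal.ofReal (C * Λ) * μH[1] γ *
            ∫⁻ X in Metric.sphere (0:E2) 1, ∫⁻ Y in Metric.sphere (0:E2) 1,
              ENNReal.ofReal (‖X - τ • Y‖ ^ (-(3:ℝ) - s)) ∂μH[1] ∂μH[1] := by
  -- a universal finite cover of the 2-sphere by balls of radius 1/8
  obtain ⟨t, ht⟩ := (isCompact_sphere (0:E3) 1).elim_finite_subcover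
    (fun p : E3 => Metric.ball p (1/8)) (fun p => Metric.isOpen_ball)
    (fun x _ => Set.mem_iUnion.2 ⟨x, Metric.mem_ball_self (by norm_num)⟩)
  set c₀ : ℝ := (t.card : ℝ) / 4 with hc₀
  have hc₀0 : 0 ≤ c₀ := by positivity
  refine ⟨836 * (c₀ + 1), by positivity, ?_⟩
  intro s hs γ hγc hγs Λ hΛ hd τ hτ
  obtain ⟨hs0, hs1⟩ := hs
  have hs0' : 0 < s := by linarith
  have hs1' : s ≤ 1 := le_of_lt hs1
  have hγm : MeasurableSet γ := hγc.measurableSet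
  have hγest : μH[1] γ ≤ ENNReal.ofReal (c₀ * Λ) := aux_gamma_meas ht hγs hΛ hd
  set δ := τ - 1 with hδdef
  have hδ0 : 0 < δ := by rw [hδdef]; linarith
  -- uniform density at all scales
  set Λ' : ℝ := (1 + 2 * c₀) * Λ with hΛ'def
  have hΛ'0 : 0 < Λ' := by positivity
  have hdens : ∀ r : ℝ, 0 < r → ∀ p ∈ γ,
      μH[1] (γ ∩ Metric.ball p r) ≤ ENNReal.ofReal (Λ' * r) := by
    intro r hr p hp
    rcases lt_or_ge r (1/2) with h | h
    · calc μH[1] (γ ∩ Metric.ball p r) ≤ ENNReal.ofReal (Λ * r) := hd p hp r ⟨hr, h⟩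
        _ ≤ ENNReal.ofReal (Λ' * r) := by
          apply ENNReal.ofReal_le_ofReal
          have : Λ ≤ Λ' := by nlinarith
          nlinarith
    · calc μH[1] (γ ∩ Metric.ball p r) ≤ μH[1] γ := measure_mono Set.inter_subset_left
        _ ≤ ENNReal.ofReal (c₀ * Λ) := hγest
        _ ≤ ENNReal.ofReal (Λ' * r) := by
          apply ENNReal.ofReal_le_ofReal
          nlinarith
  rcases le_or_gt τ 2 with hτ2 | hτ2
  · -- case 1 < τ ≤ 2
    have hLHS : (∫⁻ x in γ, ∫⁻ y in γ,
          ENNReal.ofReal (‖x - τ • y‖ ^ (-(3:ℝ) - s)) ∂μH[1] ∂μH[1])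
        ≤ ENNReal.ofReal (4 * Λ' * δ ^ (-(2:ℝ) - s)) * μH[1] γ := by
      calc (∫⁻ x in γ, ∫⁻ y in γ,
            ENNReal.ofReal (‖x - τ • y‖ ^ (-(3:ℝ) - s)) ∂μH[1] ∂μH[1])
          ≤ ∫⁻ _ in γ, ENNReal.ofReal (4 * Λ' * δ ^ (-(2:ℝ) - s)) ∂μH[1] := by
            apply setLIntegral_mono' hγm
            intro x hx
            exact aux_inner_upper hγm hγs hs0' hs1' hτ (le_of_lt hΛ'0) hdens hx
        _ = ENNReal.ofReal (4 * Λ' * δ ^ (-(2:ℝ) - s)) * μH[1] γ := setLIntegral_const _ _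
    refine hLHS.trans ?_
    have hR := aux_rhs_lower_small hs0' hs1' hτ hτ2
    calc ENNReal.ofReal (4 * Λ' * δ ^ (-(2:ℝ) - s)) * μH[1] γ
        ≤ ENNReal.ofReal (836 * (c₀ + 1) * Λ * (δ ^ (-(2:ℝ)-s) / 64)) * μH[1] γ := by
          apply mul_le_mul_left
          apply ENNReal.ofReal_le_ofReal
          have hδp : (0:ℝ) ≤ δ ^ (-(2:ℝ)-s) := by positivity
          have hconst : 4 * Λ' ≤ 836 * (c₀ + 1) * Λ / 64 := by
            rw [hΛ'def]; nlinarith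
          calc 4 * Λ' * δ ^ (-(2:ℝ) - s) ≤ (836 * (c₀ + 1) * Λ / 64) * δ ^ (-(2:ℝ)-s) :=
                mul_le_mul_of_nonneg_right hconst hδp
            _ = 836 * (c₀ + 1) * Λ * (δ ^ (-(2:ℝ)-s) / 64) := by ring
      _ = ENNReal.ofReal (836 * (c₀ + 1) * Λ) *
            ENNReal.ofReal (δ ^ (-(2:ℝ)-s) / 64) * μH[1] γ := by
          rw [← ENNReal.ofReal_mul (by positivity)]
      _ = ENNReal.ofReal (836 * (c₀ + 1) * Λ) * μH[1] γ *
            ENNReal.ofReal (δ ^ (-(2:ℝ)-s) / 64) := by ring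
      _ ≤ ENNReal.ofReal (836 * (c₀ + 1) * Λ) * μH[1] γ *
            ∫⁻ X in Metric.sphere (0:E2) 1, ∫⁻ Y in Metric.sphere (0:E2) 1,
              ENNReal.ofReal (‖X - τ • Y‖ ^ (-(3:ℝ) - s)) ∂μH[1] ∂μH[1] :=
          mul_le_mul_right hR _
  · -- case τ ≥ 2
    have hτ2' : 2 ≤ τ := le_of_lt hτ2
    have hker : ∀ x ∈ γ, ∀ y ∈ γ,
        ENNReal.ofReal (‖x - τ • y‖ ^ (-(3:ℝ) - s)) ≤ ENNReal.ofReal (δ ^ (-(3:ℝ)-s)) := by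
      intro x hx y hy
      have hxn : ‖x‖ = 1 := by have := hγs hx; rwa [mem_sphere_zero_iff_norm] at this
      have hyn : ‖y‖ = 1 := by have := hγs hy; rwa [mem_sphere_zero_iff_norm] at this
      exact ENNReal.ofReal_le_ofReal
        (Real.rpow_le_rpow_of_nonpos hδ0 (aux_dist_lower hxn hyn hτ).1 (by linarith))
    have hLHS : (∫⁻ x in γ, ∫⁻ y in γ,
          ENNReal.ofReal (‖x - τ • y‖ ^ (-(3:ℝ) - s)) ∂μH[1] ∂μH[1])
        ≤ ENNReal.ofReal (δ ^ (-(3:ℝ)-s)) * μH[1] γ * μH[1] γ := by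
      calc (∫⁻ x in γ, ∫⁻ y in γ,
            ENNReal.ofReal (‖x - τ • y‖ ^ (-(3:ℝ) - s)) ∂μH[1] ∂μH[1])
          ≤ ∫⁻ _ in γ, (ENNReal.ofReal (δ ^ (-(3:ℝ)-s)) * μH[1] γ) ∂μH[1] := by
            apply setLIntegral_mono' hγm
            intro x hx
            calc (∫⁻ y in γ, ENNReal.ofReal (‖x - τ • y‖ ^ (-(3:ℝ) - s)) ∂μH[1])
                ≤ ∫⁻ _ in γ, ENNReal.ofReal (δ ^ (-(3:ℝ)-s)) ∂μH[1] :=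
                  setLIntegral_mono' hγm (hker x hx)
              _ = ENNReal.ofReal (δ ^ (-(3:ℝ)-s)) * μH[1] γ := setLIntegral_const _ _
        _ = ENNReal.ofReal (δ ^ (-(3:ℝ)-s)) * μH[1] γ * μH[1] γ := setLIntegral_const _ _
    refine hLHS.trans ?_
    have hR := aux_rhs_lower_big hs0' hs1' hτ2'
    calc ENNReal.ofReal (δ ^ (-(3:ℝ)-s)) * μH[1] γ * μH[1] γ
        ≤ ENNReal.ofReal (δ ^ (-(3:ℝ)-s)) * ENNReal.ofReal (c₀ * Λ) * μH[1] γ :=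
          mul_le_mul_left (mul_le_mul_right hγest _) _
      _ = ENNReal.ofReal (δ ^ (-(3:ℝ)-s) * (c₀ * Λ)) * μH[1] γ := by
          rw [← ENNReal.ofReal_mul (by positivity)]
      _ ≤ ENNReal.ofReal (836 * (c₀ + 1) * Λ * (δ ^ (-(3:ℝ)-s) / 324)) * μH[1] γ := by
          apply mul_le_mul_left
          apply ENNReal.ofReal_le_ofReal
          have hδp : (0:ℝ) ≤ δ ^ (-(3:ℝ)-s) := by positivity
          nlinarith [mul_le_mul_of_nonneg_right
            (show c₀ * Λ ≤ 836 * (c₀ + 1) * Λ / 324 by nlinarith) hδp]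
      _ = ENNReal.ofReal (836 * (c₀ + 1) * Λ) *
            ENNReal.ofReal (δ ^ (-(3:ℝ)-s) / 324) * μH[1] γ := by
          rw [← ENNReal.ofReal_mul (by positivity)]
      _ = ENNReal.ofReal (836 * (c₀ + 1) * Λ) * μH[1] γ *
            ENNReal.ofReal (δ ^ (-(3:ℝ)-s) / 324) := by ring
      _ ≤ ENNReal.ofReal (836 * (c₀ + 1) * Λ) * μH[1] γ *
            ∫⁻ X in Metric.sphere (0:E2) 1, ∫⁻ Y in Metric.sphere (0:E2) 1,
              ENNReal.ofReal (‖X - τ • Y‖ ^ (-(3:ℝ) - s)) ∂μH[1] ∂μH[1] :=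
          mul_le_mul_right hR _
end
end

section
/- There exists a universal constant C such that for every s ∈ (1/2,1) the following holds. Let γ ⊂ S² be a compact set and Λ > 0 be such that H¹(γ ∩ B_ρ(p)) ≤ Λ ρ for every p ∈ γ and every ρ ∈ (0,1/2). Then for every p ∈ γ, every X̂ ∈ S¹ and every τ > 1, ∫_{γ} |p − τŷ|^{−3−s} dH¹(ŷ) ≤ C Λ ∫_{S¹} |X̂ − τŶ|^{−3−s} dH¹(Ŷ). -/
open MeasureTheory
open scoped ENNReal

noncomputable section

section Helpers

open scoped RealInnerProductSpace

lemma ksic_norm_id {E : Type*} [NormedAddCommGroup E] [InnerProductSpace ℝ E]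
    {p y : E} (hp : ‖p‖ = 1) (hy : ‖y‖ = 1) (τ : ℝ) (hτ : 0 ≤ τ) :
    ‖p - τ • y‖ ^ 2 = (τ - 1) ^ 2 + τ * ‖p - y‖ ^ 2 := by
  have h1 := norm_sub_sq_real p (τ • y)
  have h2 := norm_sub_sq_real p y
  rw [real_inner_smul_right, norm_smul, Real.norm_eq_abs, abs_of_nonneg hτ] at h1
  rw [hp, hy] at h1 h2
  nlinarith [h1, h2]

lemma ksic_kernel_eq {x : ℝ} (hx : 0 ≤ x) (e : ℝ) : x ^ e = (x ^ 2) ^ (e / 2) := by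
  rw [← Real.rpow_natCast x 2, ← Real.rpow_mul hx]
  ring_nf

lemma ksic_superlevel_iff {q lam B : ℝ} (hq : 0 < q) (hl : 0 < lam) (hB : 0 < B) :
    lam ≤ B ^ (-q) ↔ B ≤ lam⁻¹ ^ (1 / q) := by
  rw [Real.rpow_neg hB.le, le_inv_comm₀ hl (Real.rpow_pos_of_pos hB q)]
  constructor
  · intro h
    have h2 := Real.rpow_le_rpow (Real.rpow_nonneg hB.le q) h (by positivity : (0:ℝ) ≤ 1 / q)
    rwa [← Real.rpow_mul hB.le, mul_one_div, div_self hq.ne', Real.rpow_one] at h2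
  · intro h
    have h2 := Real.rpow_le_rpow hB.le h hq.le
    rwa [← Real.rpow_mul (by positivity), one_div_mul_cancel hq.ne', Real.rpow_one] at h2

lemma ksic_orth_norm {X v : E2} (hX : ‖X‖ = 1) (hv : ‖v‖ = 1) (hXv : ⟪X, v⟫ = 0)
    (a b : ℝ) : ‖a • X + b • v‖ ^ 2 = a ^ 2 + b ^ 2 := by
  rw [norm_add_sq_real, real_inner_smul_left, real_inner_smul_right, hXv,
    norm_smul, norm_smul, hX, hv]
  simp [Real.norm_eq_abs, sq_abs]

lemma ksic_exists_perp {X : E2} (hX : ‖X‖ = 1) : ∃ v : E2, ‖v‖ = 1 ∧ ⟪X, v⟫ = 0 := by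
  have hX2 : X 0 ^ 2 + X 1 ^ 2 = 1 := by
    have h := EuclideanSpace.norm_eq X
    rw [hX] at h
    have := Real.sqrt_eq_one.mp h.symm
    simpa [Fin.sum_univ_two, Real.norm_eq_abs, sq_abs] using this
  refine ⟨(EuclideanSpace.equiv (Fin 2) ℝ).symm ![-X 1, X 0], ?_, ?_⟩
  · rw [EuclideanSpace.norm_eq]
    simp only [Fin.sum_univ_two, Real.norm_eq_abs, sq_abs]
    rw [show ((EuclideanSpace.equiv (Fin 2) ℝ).symm ![-X 1, X 0] 0) = -X 1 from rfl,
      show ((EuclideanSpace.equiv (Fin 2) ℝ).symm ![-X 1, X 0] 1) = X 0 from rfl,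
      show (-X 1) ^ 2 + X 0 ^ 2 = 1 by nlinarith]
    exact Real.sqrt_one
  · rw [PiLp.inner_apply]
    simp [Fin.sum_univ_two]
    ring

lemma ksic_norm_one_of_sq {w : E2} (h : ‖w‖ ^ 2 = 1) : ‖w‖ = 1 := by
  nlinarith [norm_nonneg w]

lemma ksic_circle_lb {X : E2} (hX : ‖X‖ = 1) {r : ℝ} (hr0 : 0 < r) (hr1 : r ≤ 1) :
    ENNReal.ofReal (r / 2) ≤ μH[1] (Metric.sphere (0:E2) 1 ∩ Metric.closedBall X r) := by
  obtain ⟨v, hv, hXv⟩ := ksic_exists_perp hX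
  set A := Metric.sphere (0:E2) 1 ∩ Metric.closedBall X r with hA
  set Y : ℝ → E2 := fun θ => Real.cos θ • X + Real.sin θ • v with hY
  have hYnorm : ∀ θ, ‖Y θ‖ = 1 := by
    intro θ
    apply ksic_norm_one_of_sq
    rw [hY, ksic_orth_norm hX hv hXv]
    exact Real.cos_sq_add_sin_sq θ
  have hYdist : ∀ θ, ‖X - Y θ‖ ^ 2 = 2 - 2 * Real.cos θ := by
    intro θ
    have h1 : X - Y θ = (1 - Real.cos θ) • X + (- Real.sin θ) • v := by
      rw [hY]; module
    rw [h1, ksic_orth_norm hX hv hXv]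
    nlinarith [Real.cos_sq_add_sin_sq θ]
  have hmem : ∀ θ ∈ Set.Icc (0:ℝ) r, Y θ ∈ A := by
    rintro θ ⟨hθ0, hθr⟩
    constructor
    · simpa [mem_sphere_zero_iff_norm] using hYnorm θ
    · rw [Metric.mem_closedBall, dist_eq_norm, ← norm_sub_rev]
      have h2 : ‖X - Y θ‖ ^ 2 ≤ r ^ 2 := by
        rw [hYdist θ]
        have := Real.one_sub_sq_div_two_le_cos (x := θ)
        nlinarith
      have := Real.sqrt_le_sqrt h2
      rwa [Real.sqrt_sq (norm_nonneg _), Real.sqrt_sq hr0.le] at this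
  set f : E2 → ℝ := fun w => ⟪w, v⟫ with hf
  have hfY : ∀ θ, f (Y θ) = Real.sin θ := by
    intro θ
    rw [hf, hY]
    simp only [inner_add_left, real_inner_smul_left, hXv, real_inner_self_eq_norm_sq, hv]
    ring
  have hlip : LipschitzWith 1 f := by
    apply LipschitzWith.of_dist_le_mul
    intro a b
    rw [Real.dist_eq, dist_eq_norm, NNReal.coe_one, one_mul, hf]
    have h3 := abs_real_inner_le_norm (a - b) v
    rw [inner_sub_left, hv, mul_one] at h3
    exact h3
  have himg : Set.Icc (0:ℝ) (Real.sin r) ⊆ f '' A := by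
    intro c hc
    have h4 : Set.Icc (Real.sin 0) (Real.sin r) ⊆ Real.sin '' Set.Icc 0 r :=
      intermediate_value_Icc hr0.le Real.continuous_sin.continuousOn
    obtain ⟨θ, hθ, rfl⟩ := h4 (by simpa using hc)
    exact ⟨Y θ, hmem θ hθ, hfY θ⟩
  have hsin : r / 2 ≤ Real.sin r := by
    have h5 := Real.sin_gt_sub_cube hr0
    have h6 : r ^ 3 ≤ r := by nlinarith [sq_nonneg r]
    linarith
  calc ENNReal.ofReal (r / 2) ≤ ENNReal.ofReal (Real.sin r - 0) := by
        apply ENNReal.ofReal_le_ofReal; linarith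
    _ = μH[1] (Set.Icc (0:ℝ) (Real.sin r)) := by
        rw [MeasureTheory.hausdorffMeasure_real, Real.volume_Icc]
    _ ≤ μH[1] (f '' A) := measure_mono himg
    _ ≤ 1 * μH[1] A := by
        simpa using hlip.hausdorffMeasure_image_le (d := 1) (by norm_num) A
    _ = μH[1] A := one_mul _

lemma ksic_circle_fin : μH[1] (Metric.sphere (0:E2) 1) ≠ ⊤ := by
  set e0 : E2 := EuclideanSpace.single 0 1 with he0
  set e1 : E2 := EuclideanSpace.single 1 1 with he1
  have h0 : ‖e0‖ = 1 := by simp [he0]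
  have h1 : ‖e1‖ = 1 := by simp [he1]
  have h01 : ⟪e0, e1⟫ = 0 := by
    rw [he0, he1, EuclideanSpace.inner_single_left]
    simp [EuclideanSpace.single_apply]
  set g : ℝ → E2 := fun θ => Real.cos θ • e0 + Real.sin θ • e1 with hg
  have hlip : LipschitzWith 1 g := by
    apply LipschitzWith.of_dist_le_mul
    intro a b
    rw [dist_eq_norm, Real.dist_eq, NNReal.coe_one, one_mul]
    have hd : g a - g b = (Real.cos a - Real.cos b) • e0 + (Real.sin a - Real.sin b) • e1 := by
      rw [hg]; module
    have h2 : ‖g a - g b‖ ^ 2 ≤ |a - b| ^ 2 := by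
      rw [hd, ksic_orth_norm h0 h1 h01]
      have hcs := Real.cos_sub a b
      have hc := Real.one_sub_sq_div_two_le_cos (x := a - b)
      have e1 := Real.sin_sq_add_cos_sq a
      have e2 := Real.sin_sq_add_cos_sq b
      rw [sq_abs]
      nlinarith
    have := Real.sqrt_le_sqrt h2
    rwa [Real.sqrt_sq (norm_nonneg _), Real.sqrt_sq (abs_nonneg _)] at this
  have hcover : Metric.sphere (0:E2) 1 ⊆ g '' Set.Icc (-Real.pi) Real.pi := by
    intro w hw
    have hw1 : ‖w‖ = 1 := by simpa [mem_sphere_zero_iff_norm] using hw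
    have hw2 : w 0 ^ 2 + w 1 ^ 2 = 1 := by
      have h := EuclideanSpace.norm_eq w
      rw [hw1] at h
      have := Real.sqrt_eq_one.mp h.symm
      simpa [Fin.sum_univ_two, Real.norm_eq_abs, sq_abs] using this
    have hw0 : -1 ≤ w 0 ∧ w 0 ≤ 1 := by constructor <;> nlinarith
    set θ : ℝ := if 0 ≤ w 1 then Real.arccos (w 0) else -Real.arccos (w 0) with hθ
    have hcos : Real.cos θ = w 0 := by
      rw [hθ]; split_ifs <;> simp [Real.cos_arccos hw0.1 hw0.2]
    have hsin : Real.sin θ = w 1 := by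
      have hs : Real.sin (Real.arccos (w 0)) = Real.sqrt (1 - w 0 ^ 2) := Real.sin_arccos _
      have h1w : Real.sqrt (1 - w 0 ^ 2) = |w 1| := by
        rw [show 1 - w 0 ^ 2 = w 1 ^ 2 by linarith, Real.sqrt_sq_eq_abs]
      rw [hθ]; split_ifs with h
      · rw [hs, h1w, abs_of_nonneg h]
      · rw [Real.sin_neg, hs, h1w, abs_of_neg (lt_of_not_ge h)]; ring
    refine ⟨θ, ?_, ?_⟩
    · have ha1 := Real.arccos_nonneg (w 0)
      have ha2 := Real.arccos_le_pi (w 0)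
      have hpi := Real.pi_pos
      rw [hθ]; split_ifs <;> constructor <;> linarith
    · rw [hg]
      ext i
      fin_cases i <;>
        simp [he0, he1, EuclideanSpace.single_apply, hcos, hsin]
  have hib := hlip.hausdorffMeasure_image_le (d := 1) (by norm_num) (Set.Icc (-Real.pi) Real.pi)
  rw [MeasureTheory.hausdorffMeasure_real, Real.volume_Icc] at hib
  norm_num at hib
  have hb : μH[1] (Metric.sphere (0:E2) 1) ≤ ENNReal.ofReal (Real.pi + Real.pi) :=
    le_trans (measure_mono hcover) hib
  exact (lt_of_le_of_lt hb ENNReal.ofReal_lt_top).ne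

end Helpers

/-- there is a universal `C` such that for every `s ∈ (1/2,1)`, every compact
`γ ⊆ S²` satisfying the upper density bound `H¹(γ ∩ B_ρ(p)) ≤ Λρ` for `p ∈ γ`, `ρ ∈ (0,1/2)`,
every `p ∈ γ`, `X̂ ∈ S¹` and `τ > 1`,
`∫_γ |p−τŷ|^{−3−s} dH¹(ŷ) ≤ C Λ ∫_{S¹} |X̂−τŶ|^{−3−s} dH¹(Ŷ)`. -/
theorem kernel_single_integral_comparison :
    ∃ C : ℝ, 0 < C ∧ ∀ s ∈ Set.Ioo (1/2 : ℝ) 1,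
      ∀ γ : Set E3, IsCompact γ → γ ⊆ Metric.sphere (0:E3) 1 →
      ∀ Λ : ℝ, 0 < Λ →
      (∀ p ∈ γ, ∀ ρ ∈ Set.Ioo (0:ℝ) (1/2),
        μH[1] (γ ∩ Metric.ball p ρ) ≤ ENNReal.ofReal (Λ * ρ)) →
      ∀ p ∈ γ, ∀ X ∈ Metric.sphere (0:E2) 1, ∀ τ : ℝ, 1 < τ →
        (∫⁻ y in γ, ENNReal.ofReal (‖p - τ • y‖ ^ (-(3:ℝ) - s)) ∂μH[1])
          ≤ ENNReal.ofReal (C * Λ) *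
            ∫⁻ Y in Metric.sphere (0:E2) 1,
              ENNReal.ofReal (‖X - τ • Y‖ ^ (-(3:ℝ) - s)) ∂μH[1] := by
  obtain ⟨t, ht⟩ := (isCompact_sphere (0:E3) 1).elim_finite_subcover
      (fun x : E3 => Metric.ball x (1/8)) (fun x => Metric.isOpen_ball)
      (fun z hz => Set.mem_iUnion.2 ⟨z, Metric.mem_ball_self (by norm_num)⟩)
  refine ⟨4 + 2 * t.card, by positivity, ?_⟩
  rintro s ⟨hs1, hs2⟩ γ hγc hγs Λ hΛ hden p hp X hX τ hτ
  set C : ℝ := 4 + 2 * t.card with hC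
  have hC0 : (0:ℝ) < C := by positivity
  have hτ0 : (0:ℝ) < τ := by linarith
  have hp1 : ‖p‖ = 1 := by simpa [mem_sphere_zero_iff_norm] using hγs hp
  have hX1 : ‖X‖ = 1 := by simpa [mem_sphere_zero_iff_norm] using hX
  set q : ℝ := (3 + s) / 2 with hqdef
  have hq : 0 < q := by rw [hqdef]; linarith
  set a : ℝ := τ - 1 with ha
  have ha0 : 0 < a := by rw [ha]; linarith
  -- total measure bound for γ
  have hγtot : μH[1] γ ≤ ENNReal.ofReal ((t.card : ℝ) * (Λ / 4)) := by
    have hsub : γ ⊆ ⋃ x ∈ t, γ ∩ Metric.ball x (1/8) := by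
      intro y hy
      obtain ⟨x, hx1, hx2⟩ := Set.mem_iUnion₂.mp (ht (hγs hy))
      exact Set.mem_iUnion₂.mpr ⟨x, hx1, hy, hx2⟩
    calc μH[1] γ ≤ ∑ x ∈ t, μH[1] (γ ∩ Metric.ball x (1/8)) :=
          le_trans (measure_mono hsub) (measure_biUnion_finset_le _ _)
      _ ≤ ∑ _x ∈ t, ENNReal.ofReal (Λ * (1/4)) := by
          refine Finset.sum_le_sum fun x _ => ?_
          by_cases hne : (γ ∩ Metric.ball x (1/8)).Nonempty
          · obtain ⟨p₀, hp₀γ, hp₀b⟩ := hne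
            refine le_trans (measure_mono ?_) (hden p₀ hp₀γ (1/4) ⟨by norm_num, by norm_num⟩)
            rintro y ⟨hyγ, hyb⟩
            refine ⟨hyγ, ?_⟩
            rw [Metric.mem_ball] at hyb hp₀b ⊢
            calc dist y p₀ ≤ dist y x + dist x p₀ := dist_triangle _ _ _
              _ < 1/8 + 1/8 := by rw [dist_comm x p₀]; exact add_lt_add hyb hp₀b
              _ = 1/4 := by norm_num
          · rw [Set.not_nonempty_iff_eq_empty.mp hne]
            simp
      _ = (t.card : ℝ≥0∞) * ENNReal.ofReal (Λ * (1/4)) := by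
          rw [Finset.sum_const, nsmul_eq_mul]
      _ = ENNReal.ofReal ((t.card : ℝ) * (Λ / 4)) := by
          rw [← ENNReal.ofReal_natCast, ← ENNReal.ofReal_mul (by positivity)]
          ring_nf
  -- KEY comparison of ball measures
  have key : ∀ r : ℝ, 0 ≤ r →
      μH[1] (γ ∩ Metric.closedBall p r) ≤ ENNReal.ofReal (C * Λ) *
        μH[1] (Metric.sphere (0:E2) 1 ∩ Metric.closedBall X r) := by
    intro r hr
    rcases eq_or_lt_of_le hr with rfl | hr0
    · -- r = 0 : the left-hand side is a point, which has measure zero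
      haveI := MeasureTheory.Measure.noAtoms_hausdorff E3 (one_pos)
      calc μH[1] (γ ∩ Metric.closedBall p 0) ≤ μH[1] ({p} : Set E3) :=
            measure_mono (by rw [Metric.closedBall_zero]; exact Set.inter_subset_right)
        _ = 0 := measure_singleton p
        _ ≤ _ := zero_le
    by_cases hr4 : r < 1/4
    · -- small radius : use the density hypothesis with ρ = 2r
      have h1 : μH[1] (γ ∩ Metric.closedBall p r) ≤ ENNReal.ofReal (Λ * (2*r)) := by
        refine le_trans (measure_mono ?_) (hden p hp (2*r) ⟨by linarith, by linarith⟩)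
        rintro y ⟨hyγ, hyb⟩
        refine ⟨hyγ, ?_⟩
        rw [Metric.mem_ball]
        rw [Metric.mem_closedBall] at hyb
        linarith
      have h2 : ENNReal.ofReal (r / 2) ≤
          μH[1] (Metric.sphere (0:E2) 1 ∩ Metric.closedBall X r) :=
        ksic_circle_lb hX1 hr0 (by linarith)
      calc μH[1] (γ ∩ Metric.closedBall p r) ≤ ENNReal.ofReal (Λ * (2*r)) := h1
        _ ≤ ENNReal.ofReal (C * Λ * (r / 2)) := by
            apply ENNReal.ofReal_le_ofReal
            have hC4 : 4 ≤ C := by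
              rw [hC]
              nlinarith [Nat.cast_nonneg (α := ℝ) t.card]
            calc Λ * (2*r) = 4 * (Λ * (r/2)) := by ring
              _ ≤ C * (Λ * (r/2)) := mul_le_mul_of_nonneg_right hC4 (by positivity)
              _ = C * Λ * (r/2) := by ring
        _ = ENNReal.ofReal (C * Λ) * ENNReal.ofReal (r / 2) := by
            rw [← ENNReal.ofReal_mul (by positivity)]
        _ ≤ ENNReal.ofReal (C * Λ) *
              μH[1] (Metric.sphere (0:E2) 1 ∩ Metric.closedBall X r) :=
            mul_le_mul_right h2 _
    · -- large radius : use the total measure bound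
      push_neg at hr4
      have h1 : μH[1] (γ ∩ Metric.closedBall p r) ≤ ENNReal.ofReal ((t.card : ℝ) * (Λ / 4)) :=
        le_trans (measure_mono Set.inter_subset_left) hγtot
      have h2 : ENNReal.ofReal ((1/4 : ℝ) / 2) ≤
          μH[1] (Metric.sphere (0:E2) 1 ∩ Metric.closedBall X (1/4)) :=
        ksic_circle_lb hX1 (by norm_num) (by norm_num)
      have h3 : μH[1] (Metric.sphere (0:E2) 1 ∩ Metric.closedBall X (1/4)) ≤
          μH[1] (Metric.sphere (0:E2) 1 ∩ Metric.closedBall X r) :=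
        measure_mono (Set.inter_subset_inter_right _
          (Metric.closedBall_subset_closedBall (by linarith)))
      calc μH[1] (γ ∩ Metric.closedBall p r)
          ≤ ENNReal.ofReal ((t.card : ℝ) * (Λ / 4)) := h1
        _ ≤ ENNReal.ofReal (C * Λ * ((1/4) / 2)) := by
            apply ENNReal.ofReal_le_ofReal
            rw [hC]
            nlinarith [Nat.cast_nonneg (α := ℝ) t.card]
        _ = ENNReal.ofReal (C * Λ) * ENNReal.ofReal ((1/4 : ℝ) / 2) := by
            rw [← ENNReal.ofReal_mul (by positivity)]
        _ ≤ ENNReal.ofReal (C * Λ) *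
              μH[1] (Metric.sphere (0:E2) 1 ∩ Metric.closedBall X r) :=
            mul_le_mul_right (le_trans h2 h3) _
  -- kernel rewriting on the spheres
  have hker3 : ∀ y ∈ Metric.sphere (0:E3) 1,
      ‖p - τ • y‖ ^ (-(3:ℝ) - s) = (a^2 + τ * ‖p - y‖^2) ^ (-q) := by
    intro y hy
    have hy1 : ‖y‖ = 1 := by simpa [mem_sphere_zero_iff_norm] using hy
    rw [ksic_kernel_eq (norm_nonneg _) _, ksic_norm_id hp1 hy1 τ hτ0.le,
      show ((τ-1)^2 + τ * ‖p - y‖^2 : ℝ) = a^2 + τ * ‖p - y‖^2 by rw [ha]]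
    congr 1
    rw [hqdef]; ring
  have hker2 : ∀ Y ∈ Metric.sphere (0:E2) 1,
      ‖X - τ • Y‖ ^ (-(3:ℝ) - s) = (a^2 + τ * ‖X - Y‖^2) ^ (-q) := by
    intro Y hY
    have hY1 : ‖Y‖ = 1 := by simpa [mem_sphere_zero_iff_norm] using hY
    rw [ksic_kernel_eq (norm_nonneg _) _, ksic_norm_id hX1 hY1 τ hτ0.le,
      show ((τ-1)^2 + τ * ‖X - Y‖^2 : ℝ) = a^2 + τ * ‖X - Y‖^2 by rw [ha]]
    congr 1
    rw [hqdef]; ring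
  -- measurability of the kernels
  have hm3 : Measurable (fun y : E3 => ‖p - τ • y‖ ^ (-(3:ℝ) - s)) :=
    ((continuous_const.sub (continuous_id.const_smul τ)).norm.measurable).pow measurable_const
  have hm2 : Measurable (fun Y : E2 => ‖X - τ • Y‖ ^ (-(3:ℝ) - s)) :=
    ((continuous_const.sub (continuous_id.const_smul τ)).norm.measurable).pow measurable_const
  -- finiteness of the restricted measures
  haveI hfin3 : IsFiniteMeasure ((μH[1] : Measure E3).restrict γ) :=
    ⟨by rw [Measure.restrict_apply_univ]; exact lt_of_le_of_lt hγtot ENNReal.ofReal_lt_top⟩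
  haveI hfin2 : IsFiniteMeasure ((μH[1] : Measure E2).restrict (Metric.sphere (0:E2) 1)) :=
    ⟨by rw [Measure.restrict_apply_univ]; exact lt_top_iff_ne_top.mpr ksic_circle_fin⟩
  -- layer cake on both sides
  have heq3 := MeasureTheory.lintegral_eq_lintegral_meas_le
    ((μH[1] : Measure E3).restrict γ)
    (f := fun y : E3 => ‖p - τ • y‖ ^ (-(3:ℝ) - s))
    (Filter.Eventually.of_forall fun y => Real.rpow_nonneg (norm_nonneg _) _)
    hm3.aemeasurable
  have heq2 := MeasureTheory.lintegral_eq_lintegral_meas_le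
    ((μH[1] : Measure E2).restrict (Metric.sphere (0:E2) 1))
    (f := fun Y : E2 => ‖X - τ • Y‖ ^ (-(3:ℝ) - s))
    (Filter.Eventually.of_forall fun Y => Real.rpow_nonneg (norm_nonneg _) _)
    hm2.aemeasurable
  rw [heq3, heq2, ← MeasureTheory.lintegral_const_mul' _ _ ENNReal.ofReal_ne_top]
  refine MeasureTheory.setLIntegral_mono' measurableSet_Ioi ?_
  intro lam hlam
  rw [Set.mem_Ioi] at hlam
  set w : ℝ := lam⁻¹ ^ (1/q) with hw
  set u : ℝ := (w - a^2) / τ with hu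
  have hS3 : MeasurableSet {y : E3 | lam ≤ ‖p - τ • y‖ ^ (-(3:ℝ) - s)} :=
    hm3 measurableSet_Ici
  have hS2 : MeasurableSet {Y : E2 | lam ≤ ‖X - τ • Y‖ ^ (-(3:ℝ) - s)} :=
    hm2 measurableSet_Ici
  rw [Measure.restrict_apply hS3, Measure.restrict_apply hS2]
  have hsq : ∀ y ∈ γ, lam ≤ ‖p - τ • y‖ ^ (-(3:ℝ) - s) → ‖p - y‖^2 ≤ u := by
    intro y hyγ hyl
    rw [hker3 y (hγs hyγ)] at hyl
    have hB : 0 < a^2 + τ * ‖p - y‖^2 :=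
      add_pos_of_pos_of_nonneg (pow_pos ha0 2) (by positivity)
    have h5 := (ksic_superlevel_iff hq hlam hB).mp hyl
    rw [← hw] at h5
    rw [hu, le_div_iff₀ hτ0]
    linarith
  by_cases hu0 : 0 ≤ u
  · set r : ℝ := Real.sqrt u with hrdef
    have hsub3 : {y : E3 | lam ≤ ‖p - τ • y‖ ^ (-(3:ℝ) - s)} ∩ γ ⊆
        γ ∩ Metric.closedBall p r := by
      rintro y ⟨hyl, hyγ⟩
      refine ⟨hyγ, ?_⟩
      rw [Metric.mem_closedBall, dist_comm, dist_eq_norm, hrdef]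
      exact (Real.le_sqrt (norm_nonneg _) hu0).mpr (hsq y hyγ hyl)
    have hsub2 : Metric.sphere (0:E2) 1 ∩ Metric.closedBall X r ⊆
        {Y : E2 | lam ≤ ‖X - τ • Y‖ ^ (-(3:ℝ) - s)} ∩ Metric.sphere (0:E2) 1 := by
      rintro Y ⟨hYs, hYb⟩
      refine ⟨?_, hYs⟩
      have hB : 0 < a^2 + τ * ‖X - Y‖^2 :=
        add_pos_of_pos_of_nonneg (pow_pos ha0 2) (by positivity)
      rw [Set.mem_setOf_eq, hker2 Y hYs]
      refine (ksic_superlevel_iff hq hlam hB).mpr ?_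
      have hXYr : ‖X - Y‖ ≤ r := by
        rw [Metric.mem_closedBall, dist_eq_norm] at hYb
        rw [norm_sub_rev]
        exact hYb
      have h2 : ‖X - Y‖^2 ≤ u :=
        (Real.le_sqrt (norm_nonneg _) hu0).mp (hrdef ▸ hXYr)
      rw [hu, le_div_iff₀ hτ0] at h2
      rw [← hw]
      linarith
    calc μH[1] ({y : E3 | lam ≤ ‖p - τ • y‖ ^ (-(3:ℝ) - s)} ∩ γ)
        ≤ μH[1] (γ ∩ Metric.closedBall p r) := measure_mono hsub3
      _ ≤ ENNReal.ofReal (C * Λ) *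
            μH[1] (Metric.sphere (0:E2) 1 ∩ Metric.closedBall X r) :=
          key r (Real.sqrt_nonneg u)
      _ ≤ ENNReal.ofReal (C * Λ) *
            μH[1] ({Y : E2 | lam ≤ ‖X - τ • Y‖ ^ (-(3:ℝ) - s)} ∩ Metric.sphere (0:E2) 1) :=
          mul_le_mul_right (measure_mono hsub2) _
  · have hempty : {y : E3 | lam ≤ ‖p - τ • y‖ ^ (-(3:ℝ) - s)} ∩ γ = ∅ := by
      rw [Set.eq_empty_iff_forall_notMem]
      rintro y ⟨hyl, hyγ⟩
      exact hu0 (le_trans (sq_nonneg _) (hsq y hyγ hyl))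
    rw [hempty, measure_empty]
    exact zero_le
end
end

section
/- There exists a universal constant c > 0 such that for every s ∈ (1/2,1) and all x̂, ŷ ∈ S² with x̂ ≠ ŷ, one has k_s(x̂,ŷ) ≥ c |x̂ − ŷ|^{−2−s}. -/
open MeasureTheory
open scoped ENNReal RealInnerProductSpace

noncomputable section

/-- The kernel `k_s(x̂,ŷ) = ∫_0^∞ t (t² + 1 − 2t x̂·ŷ)^{−(3+s)/2} dt ∈ [0,∞]`. -/
def kernelK (s : ℝ) (x y : E3) : ℝ≥0∞ :=
  ∫⁻ t in Set.Ioi (0:ℝ), ENNReal.ofReal (t * (t ^ 2 + 1 - 2 * t * ⟪x, y⟫) ^ (-(3 + s)/2))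

/-- there is a universal constant `c > 0` such that for all `s ∈ (1/2,1)`
and all distinct `x̂, ŷ ∈ S²`, `k_s(x̂,ŷ) ≥ c |x̂ − ŷ|^{−2−s}`. -/
theorem kernelK_lower_bound :
    ∃ c : ℝ, 0 < c ∧ ∀ s ∈ Set.Ioo (1/2 : ℝ) 1,
      ∀ x ∈ Metric.sphere (0:E3) 1, ∀ y ∈ Metric.sphere (0:E3) 1, x ≠ y →
        ENNReal.ofReal (c * ‖x - y‖ ^ (-(2:ℝ) - s)) ≤ kernelK s x y := by
  refine ⟨1/16, by norm_num, ?_⟩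
  rintro s ⟨hs1, hs2⟩ x hx y hy hxy
  set d := ‖x - y‖ with hd
  have hd0 : 0 < d := by
    rw [hd]; exact norm_pos_iff.mpr (sub_ne_zero_of_ne hxy)
  have hx1 : ‖x‖ = 1 := mem_sphere_zero_iff_norm.mp hx
  have hy1 : ‖y‖ = 1 := mem_sphere_zero_iff_norm.mp hy
  have hd2 : d ≤ 2 := by
    calc d ≤ ‖x‖ + ‖y‖ := norm_sub_le x y
    _ = 2 := by rw [hx1, hy1]; norm_num
  have hip : ⟪x, y⟫ = 1 - d^2/2 := by
    have h := @norm_sub_sq_real E3 _ _ x y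
    rw [hx1, hy1] at h
    rw [hd]; linarith
  have hpow_nonneg : (0:ℝ) ≤ (4*d^2) ^ (-(3+s)/2) :=
    Real.rpow_nonneg (by positivity) _
  -- pointwise lower bound on the integrand on Ioc 1 (1+d)
  have hkey : ∀ t ∈ Set.Ioc (1:ℝ) (1+d),
      (4*d^2) ^ (-(3+s)/2) ≤ t * (t ^ 2 + 1 - 2 * t * ⟪x, y⟫) ^ (-(3 + s)/2) := by
    intro t ht
    obtain ⟨ht1, ht2⟩ := ht
    have hbase : t ^ 2 + 1 - 2 * t * ⟪x, y⟫ = (t-1)^2 + t*d^2 := by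
      rw [hip]; ring
    have hbpos : 0 < (t-1)^2 + t*d^2 := by positivity
    have hble : (t-1)^2 + t*d^2 ≤ 4*d^2 := by nlinarith
    have h1 : ((t-1)^2 + t*d^2) ^ (-(3+s)/2) ≥ (4*d^2) ^ (-(3+s)/2) := by
      apply Real.rpow_le_rpow_of_nonpos hbpos hble
      have : (0:ℝ) < 3 + s := by linarith
      linarith [this]
    calc (4*d^2) ^ (-(3+s)/2) ≤ ((t-1)^2 + t*d^2) ^ (-(3+s)/2) := h1
      _ ≤ t * (((t-1)^2 + t*d^2) ^ (-(3+s)/2)) := by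
          apply le_mul_of_one_le_left (Real.rpow_nonneg hbpos.le _) ht1.le
      _ = t * (t ^ 2 + 1 - 2 * t * ⟪x, y⟫) ^ (-(3 + s)/2) := by rw [hbase]
  have hmeas : Measurable fun t : ℝ =>
      ENNReal.ofReal (t * (t ^ 2 + 1 - 2 * t * ⟪x, y⟫) ^ (-(3 + s)/2)) := by
    fun_prop
  -- the real-number inequality
  have hreal : (1/16) * d ^ (-(2:ℝ) - s) ≤ (4*d^2) ^ (-(3+s)/2) * d := by
    have hsplit : (4*d^2) ^ (-(3+s)/2) = 4 ^ (-(3+s)/2) * (d^2) ^ (-(3+s)/2) :=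
      Real.mul_rpow (by norm_num) (by positivity)
    have hd2e : (d^2) ^ (-(3+s)/2) = d ^ (-(3+s)) := by
      rw [← Real.rpow_natCast d 2, ← Real.rpow_mul hd0.le]
      congr 1
      ring
    have h4 : (1/16 : ℝ) ≤ 4 ^ (-(3+s)/2) := by
      have h42 : (4:ℝ) ^ (-2:ℝ) = 1/16 := by
        rw [show (-2:ℝ) = ((-2 : ℤ) : ℝ) by norm_num, Real.rpow_intCast]
        norm_num
      rw [← h42]
      apply Real.rpow_le_rpow_of_exponent_le (by norm_num)
      linarith
    have hdd : d ^ (-(3+s)) * d = d ^ (-(2:ℝ) - s) := by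
      nth_rewrite 2 [← Real.rpow_one d]
      rw [← Real.rpow_add hd0]
      ring_nf
    rw [hsplit, hd2e, mul_assoc, hdd]
    have hdpos : (0:ℝ) < d ^ (-(2:ℝ) - s) := Real.rpow_pos_of_pos hd0 _
    nlinarith [h4, hdpos]
  calc ENNReal.ofReal (1/16 * d ^ (-(2:ℝ) - s))
      ≤ ENNReal.ofReal ((4*d^2) ^ (-(3+s)/2) * d) := ENNReal.ofReal_le_ofReal hreal
    _ = ENNReal.ofReal ((4*d^2) ^ (-(3+s)/2)) * ENNReal.ofReal d := by
        rw [ENNReal.ofReal_mul hpow_nonneg]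
    _ = ∫⁻ _ in Set.Ioc (1:ℝ) (1+d), ENNReal.ofReal ((4*d^2) ^ (-(3+s)/2)) := by
        rw [setLIntegral_const, Real.volume_Ioc]
        norm_num
    _ ≤ ∫⁻ t in Set.Ioc (1:ℝ) (1+d),
          ENNReal.ofReal (t * (t ^ 2 + 1 - 2 * t * ⟪x, y⟫) ^ (-(3 + s)/2)) :=
        setLIntegral_mono hmeas (fun t ht => ENNReal.ofReal_le_ofReal (hkey t ht))
    _ ≤ kernelK s x y := by
        apply lintegral_mono_set
        intro t ht
        exact lt_trans one_pos ht.1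
end
end

section
/- Let b ∈ (0, 1/100). Let z : [0,4π] → (−1,1) be a C¹ function with |z(0)| ≤ b/2 and |z'(θ)| ≤ b/(8π) for all θ ∈ [0,4π], and define ω : [0,4π] → ℝ³ by ω(θ) := (cos θ, sin θ, z(θ)). Assume ω is injective on [0,4π] and z(0) < z(4π). Let t₁ < t₂ and let θ̃, z̃ : [t₁,t₂] → ℝ be C¹ functions with z̃ taking values in (−1,1); define ω̃(t) := (cos θ̃(t), sin θ̃(t), z̃(t)), and assume |ω̃'(t)| = 1 for all t (arc-length parametrization), ω̃(t₁) = ω(4π), ω̃(t₂) = ω(0), and that ω̃((t₁,t₂)) is disjoint from ω((0,4π)). Then: (i) for each θ₀ ∈ (0,2π) there exists t ∈ (t₁,t₂) such that θ̃(t) − θ₀ ∈ 2πℤ, −b ≤ z(θ₀) ≤ z̃(t) ≤ z(θ₀+2π) ≤ b, and θ̃'(t) ≤ 0; (ii) the set A := {t ∈ (t₁,t₂) : |z̃(t)| ≤ b and θ̃'(t) ≤ 0} has one-dimensional Lebesgue measure at least 2π. -/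
open MeasureTheory Set Filter Topology Metric
open scoped ENNReal

noncomputable section

local notation "π" => Real.pi

/-- "Upper region" predicate: the point `(θt t, zt t)` (in lifted coordinates) lies in the
region above/right of the cut at angle `θ₀`. -/
def Up (z θt zt : ℝ → ℝ) (θ₀ t : ℝ) : Prop :=
  ∃ k : ℤ, (θt t = 2*π*k ∧ z (2*π) < zt t) ∨
    ((2*π*k < θt t ∧ θt t < 2*π*(k+1)) ∧
      (z (θt t - 2*π*k + 2*π) < zt t ∨ (θ₀ < θt t - 2*π*k ∧ z (θt t - 2*π*k) < zt t)))

/-- "Lower region" predicate. -/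
def Vp (z θt zt : ℝ → ℝ) (θ₀ t : ℝ) : Prop :=
  ∃ k : ℤ, (θt t = 2*π*k ∧ zt t < z (2*π)) ∨
    ((2*π*k < θt t ∧ θt t < 2*π*(k+1)) ∧
      (zt t < z (θt t - 2*π*k) ∨ (θt t - 2*π*k < θ₀ ∧ zt t < z (θt t - 2*π*k + 2*π))))

lemma two_pi_pos : (0:ℝ) < 2*π := by positivity

lemma kdet {x : ℝ} {k₁ k₂ : ℤ} (h₁ : 2*π*k₁ < x ∧ x < 2*π*(k₁+1))
    (h₂ : 2*π*k₂ < x ∧ x < 2*π*(k₂+1)) : k₁ = k₂ := by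
  have p := two_pi_pos
  have a : (k₁:ℝ) < k₂+1 := by
    have h := h₁.1.trans h₂.2
    have := (mul_lt_mul_iff_right₀ p).1 h
    push_cast at this; linarith
  have b : (k₂:ℝ) < k₁+1 := by
    have h := h₂.1.trans h₁.2
    have := (mul_lt_mul_iff_right₀ p).1 h
    push_cast at this; linarith
  have a' : k₁ < k₂+1 := by exact_mod_cast a
  have b' : k₂ < k₁+1 := by exact_mod_cast b
  omega

lemma kseam {x : ℝ} {k₁ k₂ : ℤ} (h₁ : x = 2*π*k₁)
    (h₂ : 2*π*k₂ < x ∧ x < 2*π*(k₂+1)) : False := by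
  have p := two_pi_pos
  have a : (k₂:ℝ) < k₁ := by
    have := h₂.1; rw [h₁] at this
    exact_mod_cast (mul_lt_mul_iff_right₀ p).1 this
  have b : (k₁:ℝ) < k₂+1 := by
    have := h₂.2; rw [h₁] at this
    have := (mul_lt_mul_iff_right₀ p).1 this
    push_cast at this; linarith
  have a' : k₂ < k₁ := by exact_mod_cast a
  have b' : k₁ < k₂+1 := by exact_mod_cast b
  omega

lemma exists_k (x : ℝ) : ∃ k : ℤ, x = 2*π*k ∨ (2*π*k < x ∧ x < 2*π*(k+1)) := by
  have p := two_pi_pos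
  refine ⟨⌊x/(2*π)⌋, ?_⟩
  have h1 : (⌊x/(2*π)⌋ : ℝ) ≤ x/(2*π) := Int.floor_le _
  have h2 : x/(2*π) < ⌊x/(2*π)⌋ + 1 := Int.lt_floor_add_one _
  have h1' : 2*π*⌊x/(2*π)⌋ ≤ x := by
    have := mul_le_mul_of_nonneg_left h1 p.le
    rwa [mul_div_cancel₀ _ p.ne'] at this
  have h2' : x < 2*π*(⌊x/(2*π)⌋+1) := by
    have := mul_lt_mul_of_pos_left h2 p
    rw [mul_div_cancel₀ _ p.ne'] at this
    push_cast at this ⊢; linarith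
  rcases eq_or_lt_of_le h1' with h | h
  · exact Or.inl h.symm
  · exact Or.inr ⟨h, by push_cast at h2' ⊢; linarith⟩

lemma notUV {z θt zt : ℝ → ℝ} {θ₀ : ℝ}
    (gpos : ∀ s ∈ Icc 0 (2*π), z s < z (s+2*π)) (t : ℝ)
    (hU : Up z θt zt θ₀ t) (hV : Vp z θt zt θ₀ t) : False := by
  obtain ⟨k₁, hU⟩ := hU
  obtain ⟨k₂, hV⟩ := hV
  rcases hU with ⟨hx₁, hU⟩ | ⟨hx₁, hU⟩ <;> rcases hV with ⟨hx₂, hV⟩ | ⟨hx₂, hV⟩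
  · linarith
  · exact kseam hx₁ hx₂
  · exact kseam hx₂ hx₁
  · have hk := kdet hx₁ hx₂
    subst hk
    set s := θt t - 2*π*(k₁:ℝ) with hs
    have hs0 : 0 < s := by simp only [hs]; linarith [hx₁.1]
    have hs2 : s < 2*π := by
      have := hx₁.2; push_cast at this; simp only [hs]; linarith
    have hg := gpos s ⟨hs0.le, hs2.le⟩
    rcases hU with hU | ⟨hU1, hU2⟩ <;> rcases hV with hV | ⟨hV1, hV2⟩ <;> linarith


lemma tendsto_z_comp {z : ℝ → ℝ} (zc : ContinuousOn z (Icc 0 (4*π)))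
    {l : Filter ℝ} {w : ℝ → ℝ} {x₀ : ℝ}
    (hx₀ : x₀ ∈ Icc 0 (4*π)) (hw : Tendsto w l (𝓝 x₀))
    (hmem : ∀ᶠ t in l, w t ∈ Icc 0 (4*π)) :
    Tendsto (fun t => z (w t)) l (𝓝 (z x₀)) :=
  (zc x₀ hx₀).tendsto.comp (tendsto_nhdsWithin_iff.2 ⟨hw, hmem⟩)

section Open

variable {z θt zt : ℝ → ℝ} {t₁ t₂ θ₀ : ℝ}
  (zc : ContinuousOn z (Icc 0 (4*π)))
  (hθ₀ : 0 < θ₀ ∧ θ₀ < 2*π)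
  {t₀ : ℝ}
  (θc : ContinuousWithinAt θt (Icc t₁ t₂) t₀)
  (ztc : ContinuousWithinAt zt (Icc t₁ t₂) t₀)

include zc hθ₀ θc ztc

lemma openU (hU : Up z θt zt θ₀ t₀) :
    ∀ᶠ t in 𝓝[Icc t₁ t₂] t₀, Up z θt zt θ₀ t := by
  have p := two_pi_pos
  set l := 𝓝[Icc t₁ t₂] t₀ with hl
  obtain ⟨k, hU⟩ := hU
  rcases hU with ⟨hk, hzgt⟩ | ⟨⟨hk1, hk2⟩, hU⟩
  · -- seam case : θt t₀ = 2πk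
    have hkl : 2*π*((k:ℝ)-1) < θt t₀ := by rw [hk]; nlinarith [Real.pi_pos]
    have hkr : θt t₀ < 2*π*((k:ℝ)+1) := by rw [hk]; nlinarith [Real.pi_pos]
    have evA : ∀ᶠ t in l, 2*π*((k:ℝ)-1) < θt t ∧ θt t < 2*π*((k:ℝ)+1) :=
      (θc.eventually (eventually_gt_nhds hkl)).and (θc.eventually (eventually_lt_nhds hkr))
    have hwt : Tendsto (fun t => θt t - 2*π*((k:ℝ)-1)) l (𝓝 (θt t₀ - 2*π*((k:ℝ)-1))) :=
      θc.sub_const _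
    have hx₀eq : θt t₀ - 2*π*((k:ℝ)-1) = 2*π := by rw [hk]; ring
    rw [hx₀eq] at hwt
    have hmemIcc : ∀ᶠ t in l, θt t - 2*π*((k:ℝ)-1) ∈ Icc (0:ℝ) (4*π) := by
      refine evA.mono fun t ht => Set.mem_Icc.2 ⟨?_, ?_⟩
      · linarith [ht.1]
      · have e : 2*π*((k:ℝ)+1) - 2*π*((k:ℝ)-1) = 4*π := by ring
        linarith [ht.2]
    have h2πmem : (2*π) ∈ Icc (0:ℝ) (4*π) := ⟨by linarith, by linarith⟩
    have evF : ∀ᶠ t in l, z (θt t - 2*π*((k:ℝ)-1)) < zt t :=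
      (tendsto_z_comp zc h2πmem hwt hmemIcc).eventually_lt ztc hzgt
    have evG : ∀ᶠ t in l, θ₀ < θt t - 2*π*((k:ℝ)-1) :=
      hwt.eventually (eventually_gt_nhds hθ₀.2)
    have evH : ∀ᶠ t in l, z (2*π) < zt t :=
      tendsto_const_nhds.eventually_lt ztc hzgt
    filter_upwards [evA, evF, evG, evH] with t hA hF hG hH
    rcases lt_trichotomy (θt t) (2*π*(k:ℝ)) with h | h | h
    · refine ⟨k-1, Or.inr ⟨⟨by push_cast; linarith [hA.1], by push_cast; linarith⟩, ?_⟩⟩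
      refine Or.inr ⟨by push_cast; linarith [hG], by push_cast; exact hF⟩
    · exact ⟨k, Or.inl ⟨h, hH⟩⟩
    · refine ⟨k, Or.inr ⟨⟨h, by push_cast; linarith [hA.2]⟩, Or.inl ?_⟩⟩
      have : θt t - 2*π*(k:ℝ) + 2*π = θt t - 2*π*((k:ℝ)-1) := by ring
      rw [this]; exact hF
  · -- interior case
    push_cast at hk2
    have evA : ∀ᶠ t in l, 2*π*(k:ℝ) < θt t ∧ θt t < 2*π*((k:ℝ)+1) :=
      (θc.eventually (eventually_gt_nhds hk1)).and (θc.eventually (eventually_lt_nhds hk2))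
    rcases hU with h1 | ⟨h2a, h2b⟩
    · have hwt : Tendsto (fun t => θt t - 2*π*(k:ℝ) + 2*π) l
          (𝓝 (θt t₀ - 2*π*(k:ℝ) + 2*π)) := (θc.sub_const _).add_const _
      have hx₀mem : θt t₀ - 2*π*(k:ℝ) + 2*π ∈ Icc (0:ℝ) (4*π) :=
        ⟨by linarith, by linarith⟩
      have hmemIcc : ∀ᶠ t in l, θt t - 2*π*(k:ℝ) + 2*π ∈ Icc (0:ℝ) (4*π) :=
        evA.mono fun t ht => ⟨by linarith [ht.1], by linarith [ht.2]⟩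
      have evB : ∀ᶠ t in l, z (θt t - 2*π*(k:ℝ) + 2*π) < zt t :=
        (tendsto_z_comp zc hx₀mem hwt hmemIcc).eventually_lt ztc h1
      filter_upwards [evA, evB] with t hA hB
      exact ⟨k, Or.inr ⟨⟨hA.1, by push_cast; linarith [hA.2]⟩, Or.inl hB⟩⟩
    · have hwt : Tendsto (fun t => θt t - 2*π*(k:ℝ)) l (𝓝 (θt t₀ - 2*π*(k:ℝ))) :=
        θc.sub_const _
      have hx₀mem : θt t₀ - 2*π*(k:ℝ) ∈ Icc (0:ℝ) (4*π) := ⟨by linarith, by linarith⟩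
      have hmemIcc : ∀ᶠ t in l, θt t - 2*π*(k:ℝ) ∈ Icc (0:ℝ) (4*π) :=
        evA.mono fun t ht => ⟨by linarith [ht.1], by linarith [ht.2]⟩
      have evD : ∀ᶠ t in l, θ₀ < θt t - 2*π*(k:ℝ) :=
        hwt.eventually (eventually_gt_nhds h2a)
      have evE : ∀ᶠ t in l, z (θt t - 2*π*(k:ℝ)) < zt t :=
        (tendsto_z_comp zc hx₀mem hwt hmemIcc).eventually_lt ztc h2b
      filter_upwards [evA, evD, evE] with t hA hD hE
      exact ⟨k, Or.inr ⟨⟨hA.1, by push_cast; linarith [hA.2]⟩, Or.inr ⟨hD, hE⟩⟩⟩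

lemma openV (hV : Vp z θt zt θ₀ t₀) :
    ∀ᶠ t in 𝓝[Icc t₁ t₂] t₀, Vp z θt zt θ₀ t := by
  have p := two_pi_pos
  set l := 𝓝[Icc t₁ t₂] t₀ with hl
  obtain ⟨k, hV⟩ := hV
  rcases hV with ⟨hk, hzlt⟩ | ⟨⟨hk1, hk2⟩, hV⟩
  · -- seam case
    have hkl : 2*π*((k:ℝ)-1) < θt t₀ := by rw [hk]; nlinarith [Real.pi_pos]
    have hkr : θt t₀ < 2*π*((k:ℝ)+1) := by rw [hk]; nlinarith [Real.pi_pos]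
    have evA : ∀ᶠ t in l, 2*π*((k:ℝ)-1) < θt t ∧ θt t < 2*π*((k:ℝ)+1) :=
      (θc.eventually (eventually_gt_nhds hkl)).and (θc.eventually (eventually_lt_nhds hkr))
    have hwt : Tendsto (fun t => θt t - 2*π*((k:ℝ)-1)) l (𝓝 (θt t₀ - 2*π*((k:ℝ)-1))) :=
      θc.sub_const _
    have hx₀eq : θt t₀ - 2*π*((k:ℝ)-1) = 2*π := by rw [hk]; ring
    rw [hx₀eq] at hwt
    have hmemIcc : ∀ᶠ t in l, θt t - 2*π*((k:ℝ)-1) ∈ Icc (0:ℝ) (4*π) := by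
      refine evA.mono fun t ht => Set.mem_Icc.2 ⟨?_, ?_⟩
      · linarith [ht.1]
      · have e : 2*π*((k:ℝ)+1) - 2*π*((k:ℝ)-1) = 4*π := by ring
        linarith [ht.2]
    have h2πmem : (2*π) ∈ Icc (0:ℝ) (4*π) := ⟨by linarith, by linarith⟩
    have evF : ∀ᶠ t in l, zt t < z (θt t - 2*π*((k:ℝ)-1)) :=
      ztc.eventually_lt (tendsto_z_comp zc h2πmem hwt hmemIcc) hzlt
    have evG : ∀ᶠ t in l, θt t - 2*π*(k:ℝ) < θ₀ :=
      (θc.sub_const _).eventually_lt tendsto_const_nhds (by rw [hk]; simpa using hθ₀.1)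
    have evH : ∀ᶠ t in l, zt t < z (2*π) :=
      ztc.eventually_lt tendsto_const_nhds hzlt
    filter_upwards [evA, evF, evG, evH] with t hA hF hG hH
    rcases lt_trichotomy (θt t) (2*π*(k:ℝ)) with h | h | h
    · refine ⟨k-1, Or.inr ⟨⟨by push_cast; linarith [hA.1], by push_cast; linarith⟩,
        Or.inl (by push_cast; exact hF)⟩⟩
    · exact ⟨k, Or.inl ⟨h, hH⟩⟩
    · refine ⟨k, Or.inr ⟨⟨h, by push_cast; linarith [hA.2]⟩, Or.inr ⟨hG, ?_⟩⟩⟩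
      have : θt t - 2*π*(k:ℝ) + 2*π = θt t - 2*π*((k:ℝ)-1) := by ring
      rw [this]; exact hF
  · -- interior case
    push_cast at hk2
    have evA : ∀ᶠ t in l, 2*π*(k:ℝ) < θt t ∧ θt t < 2*π*((k:ℝ)+1) :=
      (θc.eventually (eventually_gt_nhds hk1)).and (θc.eventually (eventually_lt_nhds hk2))
    rcases hV with h1 | ⟨h2a, h2b⟩
    · have hwt : Tendsto (fun t => θt t - 2*π*(k:ℝ)) l (𝓝 (θt t₀ - 2*π*(k:ℝ))) :=
        θc.sub_const _
      have hx₀mem : θt t₀ - 2*π*(k:ℝ) ∈ Icc (0:ℝ) (4*π) := ⟨by linarith, by linarith⟩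
      have hmemIcc : ∀ᶠ t in l, θt t - 2*π*(k:ℝ) ∈ Icc (0:ℝ) (4*π) :=
        evA.mono fun t ht => ⟨by linarith [ht.1], by linarith [ht.2]⟩
      have evB : ∀ᶠ t in l, zt t < z (θt t - 2*π*(k:ℝ)) :=
        ztc.eventually_lt (tendsto_z_comp zc hx₀mem hwt hmemIcc) h1
      filter_upwards [evA, evB] with t hA hB
      exact ⟨k, Or.inr ⟨⟨hA.1, by push_cast; linarith [hA.2]⟩, Or.inl hB⟩⟩
    · have hwt : Tendsto (fun t => θt t - 2*π*(k:ℝ) + 2*π) l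
          (𝓝 (θt t₀ - 2*π*(k:ℝ) + 2*π)) := (θc.sub_const _).add_const _
      have hx₀mem : θt t₀ - 2*π*(k:ℝ) + 2*π ∈ Icc (0:ℝ) (4*π) := ⟨by linarith, by linarith⟩
      have hmemIcc : ∀ᶠ t in l, θt t - 2*π*(k:ℝ) + 2*π ∈ Icc (0:ℝ) (4*π) :=
        evA.mono fun t ht => ⟨by linarith [ht.1], by linarith [ht.2]⟩
      have evD : ∀ᶠ t in l, θt t - 2*π*(k:ℝ) < θ₀ :=
        (θc.sub_const _).eventually_lt tendsto_const_nhds h2a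
      have evE : ∀ᶠ t in l, zt t < z (θt t - 2*π*(k:ℝ) + 2*π) :=
        ztc.eventually_lt (tendsto_z_comp zc hx₀mem hwt hmemIcc) h2b
      filter_upwards [evA, evD, evE] with t hA hD hE
      exact ⟨k, Or.inr ⟨⟨hA.1, by push_cast; linarith [hA.2]⟩, Or.inr ⟨hD, hE⟩⟩⟩

end Open


/-- The key separation/crossing lemma. -/
lemma crossing {z θt zt θt' : ℝ → ℝ} {t₁ t₂ : ℝ} (ht : t₁ < t₂)
    (zc : ContinuousOn z (Icc 0 (4*π)))
    (gpos : ∀ s ∈ Icc 0 (2*π), z s < z (s+2*π))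
    (hzne : ∀ t ∈ Ioo t₁ t₂, ∀ θ ∈ Ioo 0 (4*π), (∃ k : ℤ, θt t = θ + 2*π*k) → zt t ≠ z θ)
    (hθt : ∀ t ∈ Icc t₁ t₂, HasDerivWithinAt θt (θt' t) (Icc t₁ t₂) t)
    (θtc : ContinuousOn θt (Icc t₁ t₂))
    (ztc : ContinuousOn zt (Icc t₁ t₂))
    (hU1 : Up z θt zt θ₀ t₁) (hV2 : Vp z θt zt θ₀ t₂)
    (hθ₀ : 0 < θ₀ ∧ θ₀ < 2*π) :
    ∃ t ∈ Ioo t₁ t₂, (∃ k : ℤ, θt t - θ₀ = 2*π*k) ∧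
      z θ₀ ≤ zt t ∧ zt t ≤ z (θ₀ + 2*π) ∧ θt' t ≤ 0 := by
  have p := two_pi_pos
  set T : Set ℝ := {t | t ∈ Icc t₁ t₂ ∧ Vp z θt zt θ₀ t} with hT
  have ht₂T : t₂ ∈ T := ⟨⟨ht.le, le_refl _⟩, hV2⟩
  have hTne : T.Nonempty := ⟨t₂, ht₂T⟩
  have hTbdd : BddBelow T := ⟨t₁, fun x hx => hx.1.1⟩
  set τ := sInf T with hτ
  have hτ₁ : t₁ ≤ τ := le_csInf hTne (fun x hx => hx.1.1)
  have hτ₂ : τ ≤ t₂ := csInf_le hTbdd ht₂T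
  have hτIcc : τ ∈ Icc t₁ t₂ := ⟨hτ₁, hτ₂⟩
  -- ¬ Vp τ
  have hnV : ¬ Vp z θt zt θ₀ τ := by
    intro hV
    have hev := openV zc hθ₀ (θtc τ hτIcc) (ztc τ hτIcc) hV
    rw [eventually_iff, Metric.mem_nhdsWithin_iff] at hev
    obtain ⟨δ, hδ, hball⟩ := hev
    rcases eq_or_lt_of_le hτ₁ with h | h
    · -- τ = t₁ : then Vp t₁ and Up t₁, contradiction
      rw [h] at hU1
      exact notUV gpos τ hU1 hV
    · set t' := max t₁ (τ - δ/2) with ht'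
      have ht'lt : t' < τ := max_lt h (by linarith)
      have ht'Icc : t' ∈ Icc t₁ t₂ := ⟨le_max_left _ _, ht'lt.le.trans hτ₂⟩
      have ht'ball : t' ∈ ball τ δ := by
        rw [mem_ball, dist_comm, Real.dist_eq, abs_of_nonneg (by linarith [ht'lt.le])]
        have : τ - δ/2 ≤ t' := le_max_right _ _
        linarith
      have : Vp z θt zt θ₀ t' := hball ⟨ht'ball, ht'Icc⟩
      have : τ ≤ t' := csInf_le hTbdd ⟨ht'Icc, this⟩
      linarith
  -- ¬ Up τ
  have hnU : ¬ Up z θt zt θ₀ τ := by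
    intro hU
    have hev := openU zc hθ₀ (θtc τ hτIcc) (ztc τ hτIcc) hU
    rw [eventually_iff, Metric.mem_nhdsWithin_iff] at hev
    obtain ⟨δ, hδ, hball⟩ := hev
    obtain ⟨t', ht'T, ht'lt⟩ := exists_lt_of_csInf_lt hTne (show sInf T < τ + δ by linarith)
    have ht'ge : τ ≤ t' := csInf_le hTbdd ht'T
    have ht'ball : t' ∈ ball τ δ := by
      rw [mem_ball, Real.dist_eq, abs_of_nonneg (by linarith)]
      linarith
    exact notUV gpos t' (hball ⟨ht'ball, ht'T.1⟩) ht'T.2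
  -- τ is interior
  have hτne₁ : τ ≠ t₁ := fun h => hnU (h ▸ hU1)
  have hτne₂ : τ ≠ t₂ := fun h => hnV (h ▸ hV2)
  have hτIoo : τ ∈ Ioo t₁ t₂ := ⟨lt_of_le_of_ne hτ₁ (Ne.symm hτne₁), lt_of_le_of_ne hτ₂ hτne₂⟩
  -- coverage: Kp τ
  obtain ⟨k, hk⟩ := exists_k (θt τ)
  have hKp : θt τ - θ₀ = 2*π*k ∧ z θ₀ < zt τ ∧ zt τ < z (θ₀ + 2*π) := by
    rcases hk with hk | ⟨hk1, hk2⟩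
    · -- seam: impossible since then Up or Vp
      exfalso
      have hne := hzne τ hτIoo (2*π) ⟨p, by linarith⟩
        ⟨k-1, by push_cast; rw [hk]; ring⟩
      rcases lt_or_gt_of_ne hne with h | h
      · exact hnV ⟨k, Or.inl ⟨hk, h⟩⟩
      · exact hnU ⟨k, Or.inl ⟨hk, h⟩⟩
    · set s := θt τ - 2*π*(k:ℝ) with hs
      have hs0 : 0 < s := by simp only [hs]; linarith
      have hs2 : s < 2*π := by
        have := hk2; push_cast at this; simp only [hs]; linarith
      have hnes : zt τ ≠ z s := hzne τ hτIoo s ⟨hs0, by linarith⟩ ⟨k, by simp only [hs]; ring⟩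
      have hnes2 : zt τ ≠ z (s+2*π) := hzne τ hτIoo (s+2*π) ⟨by linarith, by linarith⟩
        ⟨k-1, by push_cast; simp only [hs]; ring⟩
      have hgap := gpos s ⟨hs0.le, hs2.le⟩
      rcases lt_trichotomy (zt τ) (z s) with h1 | h1 | h1
      · exact absurd ⟨k, Or.inr ⟨⟨by linarith [hs0], by push_cast; simp only [hs] at hs2 ⊢; linarith⟩,
          Or.inl h1⟩⟩ hnV
      · exact absurd h1 hnes
      · rcases lt_trichotomy (zt τ) (z (s+2*π)) with h2 | h2 | h2
        · rcases lt_trichotomy s θ₀ with h3 | h3 | h3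
          · exact absurd ⟨k, Or.inr ⟨⟨by linarith [hs0], by push_cast; linarith⟩,
              Or.inr ⟨h3, h2⟩⟩⟩ hnV
          · refine ⟨by simp only [hs] at h3; linarith [h3], by rw [← h3]; exact h1, by rw [← h3]; exact h2⟩
          · exact absurd ⟨k, Or.inr ⟨⟨by linarith [hs0], by push_cast; linarith⟩,
              Or.inr ⟨h3, h1⟩⟩⟩ hnU
        · exact absurd h2 hnes2
        · exact absurd ⟨k, Or.inr ⟨⟨by linarith [hs0], by push_cast; linarith⟩,
            Or.inl h2⟩⟩ hnU
  -- θt' τ ≤ 0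
  have hder : θt' τ ≤ 0 := by
    by_contra hpos
    push_neg at hpos
    have hθτ : θt τ = θ₀ + 2*π*(k:ℝ) := by linarith [hKp.1]
    -- eventual Up for points to the right in angle
    have hk1 : 2*π*(k:ℝ) < θt τ := by rw [hθτ]; linarith [hθ₀.1]
    have hk2 : θt τ < 2*π*((k:ℝ)+1) := by rw [hθτ]; nlinarith [hθ₀.2]
    have θcτ := θtc τ hτIcc
    have evA : ∀ᶠ t in 𝓝[Icc t₁ t₂] τ, 2*π*(k:ℝ) < θt t ∧ θt t < 2*π*((k:ℝ)+1) :=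
      (θcτ.eventually (eventually_gt_nhds hk1)).and (θcτ.eventually (eventually_lt_nhds hk2))
    have hwt : Tendsto (fun t => θt t - 2*π*(k:ℝ)) (𝓝[Icc t₁ t₂] τ)
        (𝓝 (θt τ - 2*π*(k:ℝ))) := θcτ.sub_const _
    have hx₀mem : θt τ - 2*π*(k:ℝ) ∈ Icc (0:ℝ) (4*π) := ⟨by linarith, by linarith⟩
    have hmemIcc : ∀ᶠ t in 𝓝[Icc t₁ t₂] τ, θt t - 2*π*(k:ℝ) ∈ Icc (0:ℝ) (4*π) := by
      refine evA.mono fun t htt => Set.mem_Icc.2 ⟨by linarith [htt.1], ?_⟩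
      have e : 2*π*((k:ℝ)+1) - 2*π*(k:ℝ) = 2*π := by ring
      linarith [htt.2]
    have hzval : z (θt τ - 2*π*(k:ℝ)) < zt τ := by
      have : θt τ - 2*π*(k:ℝ) = θ₀ := by rw [hθτ]; ring
      rw [this]; exact hKp.2.1
    have evE : ∀ᶠ t in 𝓝[Icc t₁ t₂] τ, z (θt t - 2*π*(k:ℝ)) < zt t :=
      (tendsto_z_comp zc hx₀mem hwt hmemIcc).eventually_lt (ztc τ hτIcc) hzval
    have hev : ∀ᶠ t in 𝓝[Icc t₁ t₂] τ, (θt τ < θt t → Up z θt zt θ₀ t) := by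
      filter_upwards [evA, evE] with t hA hE hgt
      exact ⟨k, Or.inr ⟨hA, Or.inr ⟨by rw [hθτ] at hgt; linarith, hE⟩⟩⟩
    rw [eventually_iff, Metric.mem_nhdsWithin_iff] at hev
    obtain ⟨δ, hδ, hball⟩ := hev
    -- slope positivity
    have hslope := (hasDerivWithinAt_iff_tendsto_slope.1 (hθt τ hτIcc))
    have hslopeev : ∀ᶠ t in 𝓝[Icc t₁ t₂ \ {τ}] τ, 0 < slope θt τ t :=
      hslope.eventually (eventually_gt_nhds hpos)
    rw [eventually_iff, Metric.mem_nhdsWithin_iff] at hslopeev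
    obtain ⟨δ₂, hδ₂, hball₂⟩ := hslopeev
    -- pick a point of T close to τ on the right
    have hmin : (0:ℝ) < min δ δ₂ := lt_min hδ hδ₂
    obtain ⟨t', ht'T, ht'lt⟩ := exists_lt_of_csInf_lt hTne
      (show sInf T < τ + min δ δ₂ by linarith)
    have ht'ge : τ ≤ t' := csInf_le hTbdd ht'T
    have ht'ne : t' ≠ τ := by
      intro h; exact hnV (h ▸ ht'T.2)
    have ht'gt : τ < t' := lt_of_le_of_ne ht'ge (Ne.symm ht'ne)
    have ht'ball : ∀ ε, 0 < ε → t' < τ + ε → t' ∈ ball τ ε := by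
      intro ε hε hlt
      rw [mem_ball, Real.dist_eq, abs_of_nonneg (by linarith)]
      linarith
    have hslope' : 0 < slope θt τ t' :=
      hball₂ ⟨ht'ball δ₂ hδ₂ (by have := min_le_right δ δ₂; linarith), ⟨ht'T.1, ht'ne⟩⟩
    have hθgt : θt τ < θt t' := by
      have h0 : (0:ℝ) < t' - τ := by linarith
      have hs := mul_pos hslope' h0
      rw [slope_def_field, div_mul_cancel₀ _ (ne_of_gt h0)] at hs
      linarith
    have hUp' : Up z θt zt θ₀ t' :=
      hball ⟨ht'ball δ hδ (by have := min_le_left δ δ₂; linarith), ht'T.1⟩ hθgt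
    exact notUV gpos t' hUp' ht'T.2
  exact ⟨τ, hτIoo, ⟨k, hKp.1⟩, hKp.2.1.le, hKp.2.2.le, hder⟩


/-- topological forced-crossing lemma on the cylinder. A double loop
`ω(θ) = (cos θ, sin θ, z(θ))`, `θ ∈ [0,4π]`, winding twice inside the band `|z| ≤ b`, is
joined from its endpoint back to its starting point by an arc-length curve
`ω̃(t) = (cos θ̃(t), sin θ̃(t), z̃(t))` avoiding the loop; then `ω̃` must cross every vertical
segment of the band with nonpositive angular speed, and the set of such times has measure
at least `2π`. -/
theorem forced_crossing (b : ℝ) (hb : b ∈ Set.Ioo (0:ℝ) (1/100))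
    (z z' : ℝ → ℝ)
    (hz : ∀ θ ∈ Set.Icc 0 (4 * Real.pi),
      HasDerivWithinAt z (z' θ) (Set.Icc 0 (4 * Real.pi)) θ)
    (hz'cont : ContinuousOn z' (Set.Icc 0 (4 * Real.pi)))
    (hzrange : ∀ θ ∈ Set.Icc 0 (4 * Real.pi), z θ ∈ Set.Ioo (-1:ℝ) 1)
    (hz0 : |z 0| ≤ b / 2)
    (hz'bd : ∀ θ ∈ Set.Icc 0 (4 * Real.pi), |z' θ| ≤ b / (8 * Real.pi))
    (hinj : Set.InjOn (fun θ => (Real.cos θ, Real.sin θ, z θ)) (Set.Icc 0 (4 * Real.pi)))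
    (hz04 : z 0 < z (4 * Real.pi))
    (t₁ t₂ : ℝ) (ht : t₁ < t₂)
    (θt zt θt' zt' : ℝ → ℝ)
    (hθt : ∀ t ∈ Set.Icc t₁ t₂, HasDerivWithinAt θt (θt' t) (Set.Icc t₁ t₂) t)
    (hzt : ∀ t ∈ Set.Icc t₁ t₂, HasDerivWithinAt zt (zt' t) (Set.Icc t₁ t₂) t)
    (hθt'cont : ContinuousOn θt' (Set.Icc t₁ t₂))
    (hzt'cont : ContinuousOn zt' (Set.Icc t₁ t₂))
    (hztrange : ∀ t ∈ Set.Icc t₁ t₂, zt t ∈ Set.Ioo (-1:ℝ) 1)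
    (harclength : ∀ t ∈ Set.Icc t₁ t₂, (θt' t) ^ 2 + (zt' t) ^ 2 = 1)
    (hstart : (Real.cos (θt t₁), Real.sin (θt t₁), zt t₁)
      = (Real.cos (4 * Real.pi), Real.sin (4 * Real.pi), z (4 * Real.pi)))
    (hend : (Real.cos (θt t₂), Real.sin (θt t₂), zt t₂) = (Real.cos 0, Real.sin 0, z 0))
    (hdisjoint : ∀ t ∈ Set.Ioo t₁ t₂, ∀ θ ∈ Set.Ioo 0 (4 * Real.pi),
      (Real.cos (θt t), Real.sin (θt t), zt t) ≠ (Real.cos θ, Real.sin θ, z θ)) :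
    (∀ θ₀ ∈ Set.Ioo 0 (2 * Real.pi), ∃ t ∈ Set.Ioo t₁ t₂,
      (∃ k : ℤ, θt t - θ₀ = 2 * Real.pi * k) ∧
      -b ≤ z θ₀ ∧ z θ₀ ≤ zt t ∧ zt t ≤ z (θ₀ + 2 * Real.pi) ∧
      z (θ₀ + 2 * Real.pi) ≤ b ∧ θt' t ≤ 0) ∧
    ENNReal.ofReal (2 * Real.pi)
      ≤ volume {t | t ∈ Set.Ioo t₁ t₂ ∧ |zt t| ≤ b ∧ θt' t ≤ 0} := by
  obtain ⟨hb0, hb100⟩ := hb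
  have pipos := Real.pi_pos
  have p := two_pi_pos
  have zc : ContinuousOn z (Icc 0 (4*π)) := fun θ hθ => (hz θ hθ).continuousWithinAt
  have θtc : ContinuousOn θt (Icc t₁ t₂) := fun t htt => (hθt t htt).continuousWithinAt
  have ztc : ContinuousOn zt (Icc t₁ t₂) := fun t htt => (hzt t htt).continuousWithinAt
  -- bound |z θ| ≤ b on [0, 4π]
  have zb : ∀ θ ∈ Icc (0:ℝ) (4*π), |z θ| ≤ b := by
    intro θ hθ
    have h0mem : (0:ℝ) ∈ Icc (0:ℝ) (4*π) := ⟨le_refl _, by linarith⟩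
    have key := (convex_Icc (0:ℝ) (4*π)).norm_image_sub_le_of_norm_hasDerivWithin_le hz
      (fun x hx => by rw [Real.norm_eq_abs]; exact hz'bd x hx) h0mem hθ
    rw [Real.norm_eq_abs, Real.norm_eq_abs, sub_zero] at key
    have habs : |θ| ≤ 4*π := by
      rw [abs_of_nonneg hθ.1]; exact hθ.2
    have hC : b/(8*π) * |θ| ≤ b/2 := by
      have hnn : (0:ℝ) ≤ b/(8*π) := by positivity
      have := mul_le_mul_of_nonneg_left habs hnn
      have he : b/(8*π) * (4*π) = b/2 := by
        field_simp; ring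
      linarith
    have htri : |z θ| ≤ |z 0| + |z θ - z 0| := by
      have := abs_add_le (z 0) (z θ - z 0)
      have he : z 0 + (z θ - z 0) = z θ := by ring
      rw [he] at this; exact this
    linarith
  -- the gap function is positive
  have gne : ∀ θ ∈ Icc (0:ℝ) (2*π), z (θ+2*π) ≠ z θ := by
    intro θ hθ he
    have h1 : θ ∈ Icc (0:ℝ) (4*π) := ⟨hθ.1, by linarith [hθ.2]⟩
    have h2 : θ+2*π ∈ Icc (0:ℝ) (4*π) := ⟨by linarith [hθ.1], by linarith [hθ.2]⟩
    have := hinj h2 h1 (by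
      simp only [Real.cos_add_two_pi, Real.sin_add_two_pi, he])
    linarith
  have gc : ContinuousOn (fun θ => z (θ+2*π) - z θ) (Icc 0 (2*π)) := by
    have c1 : ContinuousOn (fun θ : ℝ => z (θ+2*π)) (Icc 0 (2*π)) := by
      apply zc.comp ((continuous_id.add continuous_const).continuousOn)
      intro θ hθ
      exact ⟨by simp; linarith [hθ.1], by simp; linarith [hθ.2]⟩
    exact c1.sub (zc.mono (Icc_subset_Icc le_rfl (by linarith)))
  have gpos : ∀ s ∈ Icc (0:ℝ) (2*π), z s < z (s+2*π) := by
    intro s hs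
    by_contra hle
    push_neg at hle
    have hlt : z (s+2*π) < z s := lt_of_le_of_ne hle (gne s hs)
    have e1 : (0:ℝ)+2*π = 2*π := by ring
    have e2 : 2*π+2*π = 4*π := by ring
    have hsum : (z ((0:ℝ)+2*π) - z 0) + (z (2*π+2*π) - z (2*π)) > 0 := by
      rw [e1, e2]; linarith [hz04]
    have h2mem : (2*π) ∈ Icc (0:ℝ) (2*π) := ⟨by linarith, le_refl _⟩
    have h0mem : (0:ℝ) ∈ Icc (0:ℝ) (2*π) := ⟨le_refl _, by linarith⟩
    rcases le_or_gt (z ((0:ℝ)+2*π) - z 0) 0 with h0 | h0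
    · -- g(2π) > 0, g(s) < 0 : zero in [s, 2π]
      have h2π : 0 < z (2*π+2*π) - z (2*π) := by linarith
      have hsub : Icc s (2*π) ⊆ Icc (0:ℝ) (2*π) := Icc_subset_Icc hs.1 le_rfl
      have hival := intermediate_value_Icc hs.2 (gc.mono hsub)
      have h0im : (0:ℝ) ∈ Icc (z (s+2*π) - z s) (z (2*π+2*π) - z (2*π)) :=
        ⟨by linarith, by linarith⟩
      obtain ⟨c, hc, hc0⟩ := hival h0im
      exact gne c (hsub hc) (by linarith [hc0, sub_eq_zero.1 hc0])
    · -- g(0) > 0, g(s) < 0 : zero in [0, s]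
      have hsub : Icc (0:ℝ) s ⊆ Icc (0:ℝ) (2*π) := Icc_subset_Icc le_rfl hs.2
      have hival := intermediate_value_Icc' hs.1 (gc.mono hsub)
      have h0im : (0:ℝ) ∈ Icc (z (s+2*π) - z s) (z ((0:ℝ)+2*π) - z 0) :=
        ⟨by linarith, by linarith⟩
      obtain ⟨c, hc, hc0⟩ := hival h0im
      exact gne c (hsub hc) (by linarith [sub_eq_zero.1 hc0])
  -- non-collision in lifted coordinates
  have hzne : ∀ t ∈ Ioo t₁ t₂, ∀ θ ∈ Ioo (0:ℝ) (4*π),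
      (∃ k : ℤ, θt t = θ + 2*π*k) → zt t ≠ z θ := by
    rintro t htIoo θ hθ ⟨k, hk⟩ he
    apply hdisjoint t htIoo θ hθ
    have hcos : Real.cos (θt t) = Real.cos θ := by
      rw [hk, show θ + 2*π*(k:ℝ) = θ + (k:ℝ)*(2*π) by ring]
      exact Real.cos_add_int_mul_two_pi θ k
    have hsin : Real.sin (θt t) = Real.sin θ := by
      rw [hk, show θ + 2*π*(k:ℝ) = θ + (k:ℝ)*(2*π) by ring]
      exact Real.sin_add_int_mul_two_pi θ k
    rw [hcos, hsin, he]
  -- endpoint data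
  rw [Prod.mk.injEq, Prod.mk.injEq] at hstart hend
  have hc4 : Real.cos (4*π) = 1 := by
    rw [show (4:ℝ)*π = 2*π+2*π by ring, Real.cos_add_two_pi, Real.cos_two_pi]
  have hc0 : Real.cos (0:ℝ) = 1 := Real.cos_zero
  obtain ⟨n, hn⟩ := (Real.cos_eq_one_iff _).1 (by rw [hstart.1, hc4])
  obtain ⟨m, hm⟩ := (Real.cos_eq_one_iff _).1 (by rw [hend.1, hc0])
  have hz2lt4 : z (2*π) < z (4*π) := by
    have := gpos (2*π) ⟨by linarith, le_refl _⟩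
    rwa [show 2*π+2*π = 4*π by ring] at this
  have hz0lt2 : z 0 < z (2*π) := by
    have := gpos 0 ⟨le_refl _, by linarith⟩
    rwa [show (0:ℝ)+2*π = 2*π by ring] at this
  -- part (i)
  have part1 : ∀ θ₀ ∈ Set.Ioo (0:ℝ) (2 * π), ∃ t ∈ Set.Ioo t₁ t₂,
      (∃ k : ℤ, θt t - θ₀ = 2 * π * k) ∧
      -b ≤ z θ₀ ∧ z θ₀ ≤ zt t ∧ zt t ≤ z (θ₀ + 2 * π) ∧
      z (θ₀ + 2 * π) ≤ b ∧ θt' t ≤ 0 := by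
    intro θ₀ hθ₀
    have hU1 : Up z θt zt θ₀ t₁ :=
      ⟨n, Or.inl ⟨by rw [← hn]; ring, by rw [hstart.2.2]; exact hz2lt4⟩⟩
    have hV2 : Vp z θt zt θ₀ t₂ :=
      ⟨m, Or.inl ⟨by rw [← hm]; ring, by rw [hend.2.2]; exact hz0lt2⟩⟩
    obtain ⟨τ, hτIoo, hkex, h1, h2, hd⟩ :=
      crossing ht zc gpos hzne hθt θtc ztc hU1 hV2 ⟨hθ₀.1, hθ₀.2⟩
    have hm1 : θ₀ ∈ Icc (0:ℝ) (4*π) := ⟨hθ₀.1.le, by linarith [hθ₀.2]⟩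
    have hm2 : θ₀+2*π ∈ Icc (0:ℝ) (4*π) := ⟨by linarith [hθ₀.1], by linarith [hθ₀.2]⟩
    exact ⟨τ, hτIoo, hkex, (abs_le.1 (zb θ₀ hm1)).1, h1, h2, (abs_le.1 (zb _ hm2)).2, hd⟩
  refine ⟨part1, ?_⟩
  -- part (ii)
  set A : Set ℝ := {t | t ∈ Set.Ioo t₁ t₂ ∧ |zt t| ≤ b ∧ θt' t ≤ 0} with hA
  have hAsubIcc : A ⊆ Icc t₁ t₂ := fun t htA => Ioo_subset_Icc_self htA.1
  have hAmeas : MeasurableSet A := by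
    have hcl1 : IsClosed (Icc t₁ t₂ ∩ zt ⁻¹' Icc (-b) b) :=
      ztc.preimage_isClosed_of_isClosed isClosed_Icc isClosed_Icc
    have hcl2 : IsClosed (Icc t₁ t₂ ∩ θt' ⁻¹' Iic 0) :=
      hθt'cont.preimage_isClosed_of_isClosed isClosed_Icc isClosed_Iic
    have hAeq : A = Ioo t₁ t₂ ∩
        ((Icc t₁ t₂ ∩ zt ⁻¹' Icc (-b) b) ∩ (Icc t₁ t₂ ∩ θt' ⁻¹' Iic 0)) := by
      ext t
      simp only [hA, mem_setOf_eq, mem_inter_iff, mem_preimage, mem_Icc, mem_Iic, mem_Ioo]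
      constructor
      · rintro ⟨h1, h2, h3⟩
        have hIcc : t₁ ≤ t ∧ t ≤ t₂ := ⟨h1.1.le, h1.2.le⟩
        exact ⟨h1, ⟨hIcc, abs_le.1 h2⟩, hIcc, h3⟩
      · rintro ⟨h1, ⟨_, h2⟩, _, h3⟩
        exact ⟨h1, abs_le.2 h2, h3⟩
    rw [hAeq]
    exact measurableSet_Ioo.inter (hcl1.measurableSet.inter hcl2.measurableSet)
  set Ak : ℤ → Set ℝ := fun k => A ∩ (θt ⁻¹' Ioo (2*π*k) (2*π*(k+1)) ∩ Icc t₁ t₂) with hAk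
  have hAkmeas : ∀ k : ℤ, MeasurableSet (Ak k) := by
    intro k
    obtain ⟨u, hu_open, hu_eq⟩ := (_root_.continuousOn_iff'.1 θtc) (Ioo (2*π*(k:ℝ)) (2*π*(k+1))) isOpen_Ioo
    refine hAmeas.inter ?_
    rw [hu_eq]
    exact hu_open.measurableSet.inter measurableSet_Icc
  have hAkdisj : Pairwise (Function.onFun Disjoint Ak) := by
    intro i j hij
    rw [Function.onFun, Set.disjoint_left]
    intro t hti htj
    exact hij (kdet ⟨hti.2.1.1, hti.2.1.2⟩ ⟨htj.2.1.1, htj.2.1.2⟩)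
  have hlip : ∀ k : ℤ, LipschitzOnWith 1 (fun t => θt t - 2*π*(k:ℝ)) (Icc t₁ t₂) := by
    intro k
    apply (convex_Icc t₁ t₂).lipschitzOnWith_of_nnnorm_hasDerivWithin_le
      (f' := θt') (fun t htt => (hθt t htt).sub_const _)
    intro x hx
    have h2 := harclength x hx
    have hsq : (θt' x)^2 ≤ 1 := by nlinarith [sq_nonneg (zt' x)]
    have habs : |θt' x| ≤ 1 := (sq_le_one_iff_abs_le_one _).1 hsq
    rw [← NNReal.coe_le_coe]
    simpa [Real.norm_eq_abs] using habs
  have hcov : Ioo (0:ℝ) (2*π) ⊆ ⋃ k : ℤ, (fun t => θt t - 2*π*(k:ℝ)) '' Ak k := by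
    intro θ₀ hθ₀
    obtain ⟨τ, hτIoo, ⟨k, hk⟩, hb1, hb2, hb3, hb4, hd⟩ := part1 θ₀ hθ₀
    have hθτ : θt τ = θ₀ + 2*π*(k:ℝ) := by linarith [hk]
    refine mem_iUnion.2 ⟨k, ⟨τ, ⟨⟨hτIoo, abs_le.2 ⟨by linarith, by linarith⟩, hd⟩, ?_,
      Ioo_subset_Icc_self hτIoo⟩, by simp only; linarith [hk]⟩⟩
    simp only [mem_preimage, mem_Ioo]
    have e : 2*π*((k:ℝ)+1) = 2*π*(k:ℝ)+2*π := by ring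
    constructor
    · rw [hθτ]; linarith [hθ₀.1]
    · rw [hθτ]; push_cast; linarith [hθ₀.2]
  calc ENNReal.ofReal (2*π) = volume (Ioo (0:ℝ) (2*π)) := by
        rw [Real.volume_Ioo]; norm_num
  _ ≤ volume (⋃ k : ℤ, (fun t => θt t - 2*π*(k:ℝ)) '' Ak k) := measure_mono hcov
  _ ≤ ∑' k : ℤ, volume ((fun t => θt t - 2*π*(k:ℝ)) '' Ak k) := measure_iUnion_le _
  _ ≤ ∑' k : ℤ, volume (Ak k) := by
        refine ENNReal.tsum_le_tsum fun k => ?_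
        have hlip' : LipschitzOnWith 1 (fun t => θt t - 2*π*(k:ℝ)) (Ak k) :=
          (hlip k).mono (fun t htk => htk.2.2)
        have him := hlip'.hausdorffMeasure_image_le (le_of_lt (one_pos (α := ℝ)))
        rw [MeasureTheory.hausdorffMeasure_real] at him
        simpa using him
  _ = volume (⋃ k : ℤ, Ak k) := (measure_iUnion hAkdisj hAkmeas).symm
  _ ≤ volume A := measure_mono (iUnion_subset fun k => inter_subset_left)
end
end
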